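/- arXiv:2110.03812 — 5 statements merged into one kernel-verified Lean document; each statement's English description precedes it below -/
import Mathlib

section
/- For all integers r, s with 2 ≤ r ≤ s and every integer i with 1 ≤ i ≤ r − 1 and i ≤ s − 2, the digraphs ∞(r,s) and θ(r−i−1, s−i−1, i−1) have the same complementarity spectrum: Π(∞(r,s)) = Π(θ(r−i−1, s−i−1, i−1)). -/
open Matrix Polynomial

/-- `lam` is a complementarity eigenvalue of the real square matrix `A`. -/
def isComplEig {V : Type*} [Fintype V] (A : Matrix V V ℝ) (lam : ℝ) : Prop :=
  ∃ x : V → ℝ, x ≠ 0 ∧ 0 ≤ x ∧ 0 ≤ A.mulVec x - lam • x ∧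
    ∑ i, x i * (A.mulVec x - lam • x) i = 0

-- Adjacency matrix of a digraph given by its arc relation.
open scoped Classical in
noncomputable def adjMat {V : Type*} (adj : V → V → Prop) : Matrix V V ℝ :=
  Matrix.of fun i j => if adj i j then 1 else 0

/-- Arc relation of the digraph `∞(r,s)`: the coalescence of the directed cycles
`C_r` and `C_s` at the vertex `0`, on the vertex set `{0, …, r+s-2}`. -/
def inftyAdj (r s : ℕ) : Fin (r + s - 1) → Fin (r + s - 1) → Prop := fun i j =>
  (j.val = i.val + 1 ∧ i.val ≤ r - 2) ∨
  (i.val = r - 1 ∧ j.val = 0) ∨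
  (i.val = 0 ∧ j.val = r) ∨
  (j.val = i.val + 1 ∧ r ≤ i.val ∧ i.val ≤ r + s - 3) ∨
  (i.val = r + s - 2 ∧ j.val = 0)

/-- Arc relation of the digraph `θ(a,b,c)` on `a+b+c+2` vertices: `u = 0`, `v = a+1`,
a directed path from `u` to `v` through the `a` internal vertices `1, …, a`,
a directed path from `u` to `v` through the `b` internal vertices `a+2, …, a+b+1`,
and a directed path from `v` to `u` through the `c` internal vertices `a+b+2, …, a+b+c+1`. -/
def thetaAdj (a b c : ℕ) : Fin (a + b + c + 2) → Fin (a + b + c + 2) → Prop := fun i j =>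
  (j.val = i.val + 1 ∧ i.val ≤ a) ∨
  (i.val = 0 ∧ j.val = a + 2) ∨
  (j.val = i.val + 1 ∧ a + 2 ≤ i.val ∧ i.val ≤ a + b) ∨
  (i.val = a + b + 1 ∧ j.val = a + 1) ∨
  (c = 0 ∧ i.val = a + 1 ∧ j.val = 0) ∨
  (0 < c ∧ i.val = a + 1 ∧ j.val = a + b + 2) ∨
  (j.val = i.val + 1 ∧ a + b + 2 ≤ i.val ∧ i.val ≤ a + b + c) ∨
  (0 < c ∧ i.val = a + b + c + 1 ∧ j.val = 0)

open scoped Classical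

lemma mulVec_adj {n : ℕ} (adj : Fin n → Fin n → Prop) (x : Fin n → ℝ) (i : Fin n) :
    (adjMat adj).mulVec x i = ∑ j, (if adj i j then x j else 0) := by
  simp only [adjMat, Matrix.mulVec, dotProduct, Matrix.of_apply]
  refine Finset.sum_congr rfl fun j _ => ?_
  by_cases h : adj i j <;> simp [h]

lemma mulVec_single {n : ℕ} (adj : Fin n → Fin n → Prop) (x : Fin n → ℝ) (i k : Fin n)
    (h : ∀ j, adj i j ↔ j = k) : (adjMat adj).mulVec x i = x k := by
  rw [mulVec_adj]
  rw [Finset.sum_congr rfl (fun j _ => by rw [if_congr (h j) rfl rfl])]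
  simp

lemma mulVec_pair {n : ℕ} (adj : Fin n → Fin n → Prop) (x : Fin n → ℝ) (i k1 k2 : Fin n)
    (hne : k1 ≠ k2) (h : ∀ j, adj i j ↔ (j = k1 ∨ j = k2)) :
    (adjMat adj).mulVec x i = x k1 + x k2 := by
  rw [mulVec_adj]
  rw [Finset.sum_congr rfl (fun j _ => by rw [if_congr (h j) rfl rfl])]
  have h2 : ∀ j : Fin n, (if j = k1 ∨ j = k2 then x j else 0)
      = (if j = k1 then x j else 0) + (if j = k2 then x j else 0) := by
    intro j
    by_cases h1 : j = k1 <;> by_cases h2 : j = k2 <;> simp [h1, h2] <;> simp_all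
  rw [Finset.sum_congr rfl (fun j _ => h2 j), Finset.sum_add_distrib]
  simp

lemma mulVec_nonneg {n : ℕ} (adj : Fin n → Fin n → Prop) (x : Fin n → ℝ) (h0 : 0 ≤ x) (i : Fin n) :
    0 ≤ (adjMat adj).mulVec x i := by
  rw [mulVec_adj]
  refine Finset.sum_nonneg fun j _ => ?_
  by_cases h : adj i j <;> simp [h]
  exact h0 j

lemma isComplEig_of {n : ℕ} (adj : Fin n → Fin n → Prop) (lam : ℝ) (x : Fin n → ℝ)
    (hx : x ≠ 0) (h0 : 0 ≤ x)
    (heq : ∀ i, x i ≠ 0 → (adjMat adj).mulVec x i = lam * x i) :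
    isComplEig (adjMat adj) lam := by
  have hge : ∀ i, lam * x i ≤ (adjMat adj).mulVec x i := by
    intro i
    by_cases h : x i = 0
    · rw [h, mul_zero]; exact mulVec_nonneg adj x h0 i
    · rw [heq i h]
  refine ⟨x, hx, h0, ?_, ?_⟩
  · intro i
    simp only [Pi.zero_apply, Pi.sub_apply, Pi.smul_apply, smul_eq_mul]
    linarith [hge i]
  · refine Finset.sum_eq_zero fun i _ => ?_
    by_cases h : x i = 0
    · simp [h]
    · simp only [Pi.sub_apply, Pi.smul_apply, smul_eq_mul, heq i h]
      ring

lemma geomPos (y : ℕ → ℝ) (lam : ℝ) (hl : 0 < lam) (a : ℕ) (ha : 0 < y a) :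
    ∀ b, a ≤ b → (∀ j, a ≤ j → j < b → 0 < y j → y (j+1) = lam * y j) →
      y b = lam ^ (b - a) * y a ∧ 0 < y b := by
  intro b hab
  induction b, hab using Nat.le_induction with
  | base => intro _; exact ⟨by simp, ha⟩
  | succ m hm ih =>
    intro hstep
    obtain ⟨hval, hpos⟩ := ih (fun j h1 h2 => hstep j h1 (by omega))
    have h1 : y (m+1) = lam * y m := hstep m hm (by omega) hpos
    refine ⟨?_, by rw [h1]; positivity⟩
    rw [h1, hval, show m + 1 - a = (m - a) + 1 by omega, pow_succ]; ring

lemma pow_eq_one_pos {lam : ℝ} (h : 0 < lam) {k : ℕ} (hk : 1 ≤ k) (he : lam ^ k = 1) :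
    lam = 1 := by
  rcases lt_trichotomy lam 1 with h1 | h1 | h1
  · have := pow_lt_one₀ (le_of_lt h) h1 (by omega : k ≠ 0)
    linarith
  · exact h1
  · have := one_lt_pow₀ h1 (by omega : k ≠ 0)
    linarith

lemma theta_pi_fwd (a b' c : ℕ) (lam : ℝ)
    (h : isComplEig (adjMat (thetaAdj a (b'+1) c)) lam) :
    lam = 0 ∨ lam = 1 ∨
      (0 < lam ∧ lam ^ (a+c+2+(b'+1+c+2)) = lam ^ (a+c+2) + lam ^ (b'+1+c+2)) := by
  obtain ⟨x, hx, hpos, hge, hsum⟩ := h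
  have key : ∀ i, x i ≠ 0 → (adjMat (thetaAdj a (b'+1) c)).mulVec x i = lam * x i := by
    intro i hxi
    have hnn : ∀ i ∈ Finset.univ,
        0 ≤ x i * ((adjMat (thetaAdj a (b'+1) c)).mulVec x - lam • x) i :=
      fun i _ => mul_nonneg (hpos i) (hge i)
    have hz := (Finset.sum_eq_zero_iff_of_nonneg hnn).mp hsum i (Finset.mem_univ i)
    rcases mul_eq_zero.mp hz with h | h
    · exact absurd h hxi
    · simp only [Pi.sub_apply, Pi.smul_apply, smul_eq_mul] at h
      linarith
  rcases lt_trichotomy lam 0 with hlam | hlam | hlam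
  · exfalso
    obtain ⟨i, hxi⟩ := Function.ne_iff.mp hx
    have hxi' : 0 < x i := lt_of_le_of_ne (hpos i) (Ne.symm hxi)
    have h1 := key i hxi
    have h2 := mulVec_nonneg (thetaAdj a (b'+1) c) x hpos i
    nlinarith
  · exact Or.inl hlam
  set y : ℕ → ℝ := fun j => if h : j < a+(b'+1)+c+2 then x ⟨j, h⟩ else 0 with hy
  have hyv : ∀ (j : ℕ) (h : j < a+(b'+1)+c+2), y j = x ⟨j, h⟩ := fun j h => dif_pos h
  have hynn : ∀ j, 0 ≤ y j := by
    intro j; rw [hy]; dsimp only; split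
    · exact hpos _
    · exact le_refl 0
  have eqP1 : ∀ m, 1 ≤ m → m ≤ a → 0 < y m → y (m+1) = lam * y m := by
    intro m h1 h2 hp
    have hm : m < a+(b'+1)+c+2 := by omega
    have hm1 : m + 1 < a+(b'+1)+c+2 := by omega
    have hxm : x ⟨m, hm⟩ ≠ 0 := by rw [← hyv m hm]; exact ne_of_gt hp
    have hk := key ⟨m, hm⟩ hxm
    rw [mulVec_single _ x ⟨m, hm⟩ ⟨m+1, hm1⟩
      (fun j => by have hj := j.isLt; simp only [thetaAdj, Fin.ext_iff, true_and, false_and, and_true, and_false, or_false, false_or]; omega)] at hk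
    rw [hyv (m+1) hm1, hyv m hm]
    exact hk
  have eqV0 : c = 0 → 0 < y (a+1) → y 0 = lam * y (a+1) := by
    intro hc hp
    have hm : a+1 < a+(b'+1)+c+2 := by omega
    have hm0 : 0 < a+(b'+1)+c+2 := by omega
    have hxm : x ⟨a+1, hm⟩ ≠ 0 := by rw [← hyv _ hm]; exact ne_of_gt hp
    have hk := key ⟨a+1, hm⟩ hxm
    rw [mulVec_single _ x ⟨a+1, hm⟩ ⟨0, hm0⟩
      (fun j => by have hj := j.isLt; have hc' := hc; simp only [thetaAdj, Fin.ext_iff, true_and, false_and, and_true, and_false, or_false, false_or]; omega)] at hk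
    rw [hyv 0 hm0, hyv _ hm]
    exact hk
  have eqV1 : 0 < c → 0 < y (a+1) → y (a+b'+3) = lam * y (a+1) := by
    intro hc hp
    have hm : a+1 < a+(b'+1)+c+2 := by omega
    have hm1 : a+b'+3 < a+(b'+1)+c+2 := by omega
    have hxm : x ⟨a+1, hm⟩ ≠ 0 := by rw [← hyv _ hm]; exact ne_of_gt hp
    have hk := key ⟨a+1, hm⟩ hxm
    rw [mulVec_single _ x ⟨a+1, hm⟩ ⟨a+b'+3, hm1⟩
      (fun j => by have hj := j.isLt; have hc' := hc; simp only [thetaAdj, Fin.ext_iff, true_and, false_and, and_true, and_false, or_false, false_or]; omega)] at hk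
    rw [hyv _ hm1, hyv _ hm]
    exact hk
  have eqP2 : ∀ m, a+2 ≤ m → m ≤ a+b'+1 → 0 < y m → y (m+1) = lam * y m := by
    intro m h1 h2 hp
    have hm : m < a+(b'+1)+c+2 := by omega
    have hm1 : m + 1 < a+(b'+1)+c+2 := by omega
    have hxm : x ⟨m, hm⟩ ≠ 0 := by rw [← hyv m hm]; exact ne_of_gt hp
    have hk := key ⟨m, hm⟩ hxm
    rw [mulVec_single _ x ⟨m, hm⟩ ⟨m+1, hm1⟩
      (fun j => by have hj := j.isLt; simp only [thetaAdj, Fin.ext_iff, true_and, false_and, and_true, and_false, or_false, false_or]; omega)] at hk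
    rw [hyv (m+1) hm1, hyv m hm]
    exact hk
  have eqW : 0 < y (a+b'+2) → y (a+1) = lam * y (a+b'+2) := by
    intro hp
    have hm : a+b'+2 < a+(b'+1)+c+2 := by omega
    have hm1 : a+1 < a+(b'+1)+c+2 := by omega
    have hxm : x ⟨a+b'+2, hm⟩ ≠ 0 := by rw [← hyv _ hm]; exact ne_of_gt hp
    have hk := key ⟨a+b'+2, hm⟩ hxm
    rw [mulVec_single _ x ⟨a+b'+2, hm⟩ ⟨a+1, hm1⟩
      (fun j => by have hj := j.isLt; simp only [thetaAdj, Fin.ext_iff, true_and, false_and, and_true, and_false, or_false, false_or]; omega)] at hk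
    rw [hyv _ hm1, hyv _ hm]
    exact hk
  have eqP3 : ∀ m, a+b'+3 ≤ m → m ≤ a+b'+c+1 → 0 < y m → y (m+1) = lam * y m := by
    intro m h1 h2 hp
    have hm : m < a+(b'+1)+c+2 := by omega
    have hm1 : m + 1 < a+(b'+1)+c+2 := by omega
    have hxm : x ⟨m, hm⟩ ≠ 0 := by rw [← hyv m hm]; exact ne_of_gt hp
    have hk := key ⟨m, hm⟩ hxm
    rw [mulVec_single _ x ⟨m, hm⟩ ⟨m+1, hm1⟩
      (fun j => by have hj := j.isLt; simp only [thetaAdj, Fin.ext_iff, true_and, false_and, and_true, and_false, or_false, false_or]; omega)] at hk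
    rw [hyv (m+1) hm1, hyv m hm]
    exact hk
  have eqZ : 0 < c → 0 < y (a+b'+c+2) → y 0 = lam * y (a+b'+c+2) := by
    intro hc hp
    have hm : a+b'+c+2 < a+(b'+1)+c+2 := by omega
    have hm0 : 0 < a+(b'+1)+c+2 := by omega
    have hxm : x ⟨a+b'+c+2, hm⟩ ≠ 0 := by rw [← hyv _ hm]; exact ne_of_gt hp
    have hk := key ⟨a+b'+c+2, hm⟩ hxm
    rw [mulVec_single _ x ⟨a+b'+c+2, hm⟩ ⟨0, hm0⟩
      (fun j => by have hj := j.isLt; have hc' := hc; simp only [thetaAdj, Fin.ext_iff, true_and, false_and, and_true, and_false, or_false, false_or]; omega)] at hk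
    rw [hyv 0 hm0, hyv _ hm]
    exact hk
  have eq0 : 0 < y 0 → lam * y 0 = y 1 + y (a+2) := by
    intro hp
    have hm0 : 0 < a+(b'+1)+c+2 := by omega
    have hm1 : 1 < a+(b'+1)+c+2 := by omega
    have hm2 : a+2 < a+(b'+1)+c+2 := by omega
    have hxm : x ⟨0, hm0⟩ ≠ 0 := by rw [← hyv _ hm0]; exact ne_of_gt hp
    have hk := key ⟨0, hm0⟩ hxm
    rw [mulVec_pair _ x ⟨0, hm0⟩ ⟨1, hm1⟩ ⟨a+2, hm2⟩
      (by simp only [ne_eq, Fin.mk.injEq]; omega)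
      (fun j => by have hj := j.isLt; simp only [thetaAdj, Fin.ext_iff, true_and, false_and, and_true, and_false, or_false, false_or]; omega)] at hk
    rw [hyv 0 hm0, hyv 1 hm1, hyv (a+2) hm2]
    linarith [hk]
  have hfromV : 0 < y (a+1) → y 0 = lam ^ (c+1) * y (a+1) ∧ 0 < y 0 := by
    intro hp
    rcases Nat.eq_zero_or_pos c with hc | hc
    · have h0 := eqV0 hc hp
      subst hc
      exact ⟨by rw [h0]; ring, by rw [h0]; positivity⟩
    · have h1 := eqV1 hc hp
      have hpos1 : 0 < y (a+b'+3) := by rw [h1]; positivity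
      obtain ⟨hv, hp3⟩ := geomPos y lam hlam (a+b'+3) hpos1 (a+b'+c+2) (by omega)
        (fun j hj1 hj2 hjp => eqP3 j hj1 (by omega) hjp)
      have hZ := eqZ hc hp3
      refine ⟨?_, by rw [hZ]; positivity⟩
      rw [hZ, hv, show a+b'+c+2 - (a+b'+3) = c-1 by omega, h1,
        show c+1 = (c-1)+1+1 by omega]
      ring
  have hfrom1 : 0 < y 1 → y 0 = lam ^ (a+c+1) * y 1 ∧ 0 < y 0 := by
    intro h1
    obtain ⟨hv, hp⟩ := geomPos y lam hlam 1 h1 (a+1) (by omega)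
      (fun j hj1 hj2 hjp => eqP1 j hj1 (by omega) hjp)
    obtain ⟨hv2, hp2⟩ := hfromV hp
    refine ⟨?_, hp2⟩
    rw [hv2, hv, show a+1-1 = a by omega]
    ring
  have hfrom2 : 0 < y (a+2) → y 0 = lam ^ (b'+c+2) * y (a+2) ∧ 0 < y 0 := by
    intro h1
    obtain ⟨hv, hp⟩ := geomPos y lam hlam (a+2) h1 (a+b'+2) (by omega)
      (fun j hj1 hj2 hjp => eqP2 j hj1 (by omega) hjp)
    have hW := eqW hp
    have hpv : 0 < y (a+1) := by rw [hW]; positivity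
    obtain ⟨hv2, hp2⟩ := hfromV hpv
    refine ⟨?_, hp2⟩
    rw [hv2, hW, hv, show a+b'+2 - (a+2) = b' by omega]
    ring
  have hy0 : 0 < y 0 := by
    obtain ⟨i, hxi⟩ := Function.ne_iff.mp hx
    have hyi : 0 < y i.val := by
      rw [hyv i.val i.isLt, Fin.eta]
      exact lt_of_le_of_ne (hpos i) (Ne.symm hxi)
    have hi := i.isLt
    by_cases hm0 : i.val = 0
    · rwa [hm0] at hyi
    by_cases hc1 : i.val ≤ a + 1
    · obtain ⟨_, hp⟩ := geomPos y lam hlam i.val hyi (a+1) (by omega)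
        (fun j hj1 hj2 hjp => eqP1 j (by omega) (by omega) hjp)
      exact (hfromV hp).2
    by_cases hc2 : i.val ≤ a + b' + 2
    · obtain ⟨_, hp⟩ := geomPos y lam hlam i.val hyi (a+b'+2) (by omega)
        (fun j hj1 hj2 hjp => eqP2 j (by omega) (by omega) hjp)
      have hW := eqW hp
      have hpv : 0 < y (a+1) := by rw [hW]; positivity
      exact (hfromV hpv).2
    · have hc : 0 < c := by omega
      obtain ⟨_, hp⟩ := geomPos y lam hlam i.val hyi (a+b'+c+2) (by omega)
        (fun j hj1 hj2 hjp => eqP3 j (by omega) (by omega) hjp)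
      rw [eqZ hc hp]; positivity
  have heq0 := eq0 hy0
  by_cases h1 : y 1 = 0
  · have hr2 : 0 < y (a+2) := by nlinarith [hynn (a+2)]
    obtain ⟨hv2, _⟩ := hfrom2 hr2
    have hfact : (lam ^ (b'+1+c+2) - 1) * y (a+2) = 0 := by
      linear_combination heq0 + h1 - lam * hv2
    have hone : lam ^ (b'+1+c+2) = 1 := by
      rcases mul_eq_zero.mp hfact with h | h
      · linarith
      · exact absurd h (ne_of_gt hr2)
    exact Or.inr (Or.inl (pow_eq_one_pos hlam (by omega) hone))
  · have h1p : 0 < y 1 := lt_of_le_of_ne (hynn 1) (Ne.symm h1)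
    obtain ⟨hv1, _⟩ := hfrom1 h1p
    by_cases h2 : y (a+2) = 0
    · have hfact : (lam ^ (a+c+2) - 1) * y 1 = 0 := by
        linear_combination heq0 + h2 - lam * hv1
      have hone : lam ^ (a+c+2) = 1 := by
        rcases mul_eq_zero.mp hfact with h | h
        · linarith
        · exact absurd h (ne_of_gt h1p)
      exact Or.inr (Or.inl (pow_eq_one_pos hlam (by omega) hone))
    · have h2p : 0 < y (a+2) := lt_of_le_of_ne (hynn _) (Ne.symm h2)
      obtain ⟨hv2, _⟩ := hfrom2 h2p
      refine Or.inr (Or.inr ⟨hlam, ?_⟩)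
      have hfact : (lam ^ (a+c+2+(b'+1+c+2)) - lam ^ (a+c+2) - lam ^ (b'+1+c+2)) * y 0 = 0 := by
        linear_combination (lam^(a+b'+2*c+4)) * heq0 - lam^(b'+1+c+2) * hv1 - lam^(a+c+2) * hv2
      rcases mul_eq_zero.mp hfact with h | h
      · linarith
      · exact absurd h (ne_of_gt hy0)

lemma theta_pi_bwd (a b' c : ℕ) (lam : ℝ)
    (h : lam = 0 ∨ lam = 1 ∨
      (0 < lam ∧ lam ^ (a+c+2+(b'+1+c+2)) = lam ^ (a+c+2) + lam ^ (b'+1+c+2))) :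
    isComplEig (adjMat (thetaAdj a (b'+1) c)) lam := by
  have hm0 : 0 < a+(b'+1)+c+2 := by omega
  have hm1 : 1 < a+(b'+1)+c+2 := by omega
  have hm2 : a+2 < a+(b'+1)+c+2 := by omega
  rcases h with rfl | rfl | ⟨hlam, heq⟩
  · -- lam = 0
    set x : Fin (a+(b'+1)+c+2) → ℝ := fun j => if j.val = 0 then 1 else 0 with hxd
    refine isComplEig_of _ 0 x ?_ ?_ ?_
    · intro hcon
      have h0 := congrFun hcon ⟨0, hm0⟩
      have h0' : (1:ℝ) = 0 := h0
      norm_num at h0'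
    · intro j
      have : x j = if j.val = 0 then 1 else 0 := rfl
      rw [this]; split <;> norm_num
    · rintro ⟨iv, hlt⟩ hxi
      have hi0 : iv = 0 := by
        by_contra hc
        exact hxi (if_neg hc)
      subst hi0
      rw [mulVec_pair _ x ⟨0, hlt⟩ ⟨1, hm1⟩ ⟨a+2, hm2⟩
        (by simp only [ne_eq, Fin.mk.injEq]; omega)
        (fun j => by have hj := j.isLt; simp only [thetaAdj, Fin.ext_iff, true_and, false_and, and_true, and_false, or_false, false_or]; omega)]
      have e1 : x ⟨1, hm1⟩ = 0 := by
        have h' : x ⟨1, hm1⟩ = if (1:ℕ) = 0 then (1:ℝ) else 0 := rfl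
        rw [h', if_neg (by omega)]
      have e2 : x ⟨a+2, hm2⟩ = 0 := by
        have h' : x ⟨a+2, hm2⟩ = if a+2 = 0 then (1:ℝ) else 0 := rfl
        rw [h', if_neg (by omega)]
      rw [e1, e2]
      norm_num
  · -- lam = 1 : indicator of the cycle through paths 1 and 3
    set x : Fin (a+(b'+1)+c+2) → ℝ :=
      fun j => if j.val ≤ a+1 ∨ a+b'+3 ≤ j.val then 1 else 0 with hxd
    have xval : ∀ (k : ℕ) (hk : k < a+(b'+1)+c+2),
        x ⟨k, hk⟩ = if k ≤ a+1 ∨ a+b'+3 ≤ k then 1 else 0 := fun k hk => rfl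
    refine isComplEig_of _ 1 x ?_ ?_ ?_
    · intro hcon
      have h0 := congrFun hcon ⟨0, hm0⟩
      rw [xval 0 hm0, if_pos (by omega)] at h0
      norm_num at h0
    · intro j
      have : x j = if j.val ≤ a+1 ∨ a+b'+3 ≤ j.val then 1 else 0 := rfl
      rw [this]; split <;> norm_num
    · rintro ⟨iv, hlt⟩ hxi
      have hi : iv ≤ a+1 ∨ a+b'+3 ≤ iv := by
        by_contra hc
        exact hxi (if_neg hc)
      by_cases hi0 : iv = 0
      · subst hi0
        rw [mulVec_pair _ x ⟨0, hlt⟩ ⟨1, hm1⟩ ⟨a+2, hm2⟩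
          (by simp only [ne_eq, Fin.mk.injEq]; omega)
          (fun j => by have hj := j.isLt; simp only [thetaAdj, Fin.ext_iff, true_and, false_and, and_true, and_false, or_false, false_or]; omega)]
        rw [xval 1 hm1, xval (a+2) hm2, xval 0 hlt,
          if_pos (by omega : (1:ℕ) ≤ a+1 ∨ a+b'+3 ≤ 1),
          if_neg (by omega : ¬ (a+2 ≤ a+1 ∨ a+b'+3 ≤ a+2)),
          if_pos (by omega : (0:ℕ) ≤ a+1 ∨ a+b'+3 ≤ 0)]
        norm_num
      · by_cases hiv : iv = a+1
        · subst hiv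
          rcases Nat.eq_zero_or_pos c with hc | hc
          · rw [mulVec_single _ x ⟨a+1, hlt⟩ ⟨0, hm0⟩
              (fun j => by have hj := j.isLt; have hc' := hc; simp only [thetaAdj, Fin.ext_iff, true_and, false_and, and_true, and_false, or_false, false_or]; omega)]
            rw [xval 0 hm0, xval (a+1) hlt, if_pos (by omega), if_pos (by omega)]
            norm_num
          · have hm3 : a+b'+3 < a+(b'+1)+c+2 := by omega
            rw [mulVec_single _ x ⟨a+1, hlt⟩ ⟨a+b'+3, hm3⟩
              (fun j => by have hj := j.isLt; have hc' := hc; simp only [thetaAdj, Fin.ext_iff, true_and, false_and, and_true, and_false, or_false, false_or]; omega)]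
            rw [xval (a+b'+3) hm3, xval (a+1) hlt, if_pos (by omega), if_pos (by omega)]
            norm_num
        · rcases hi with hi | hi
          · -- 1 ≤ iv ≤ a
            have h1 : 1 ≤ iv := by omega
            have h2 : iv ≤ a := by omega
            have hlt1 : iv + 1 < a+(b'+1)+c+2 := by omega
            rw [mulVec_single _ x ⟨iv, hlt⟩ ⟨iv+1, hlt1⟩
              (fun j => by have hj := j.isLt; simp only [thetaAdj, Fin.ext_iff, true_and, false_and, and_true, and_false, or_false, false_or]; omega)]
            rw [xval (iv+1) hlt1, xval iv hlt, if_pos (by omega), if_pos (by omega)]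
            norm_num
          · -- a+b'+3 ≤ iv ≤ a+b'+c+2, so c ≥ 1
            have hc : 0 < c := by omega
            by_cases hlast : iv = a+b'+c+2
            · subst hlast
              rw [mulVec_single _ x ⟨a+b'+c+2, hlt⟩ ⟨0, hm0⟩
                (fun j => by have hj := j.isLt; have hc' := hc; simp only [thetaAdj, Fin.ext_iff, true_and, false_and, and_true, and_false, or_false, false_or]; omega)]
              rw [xval 0 hm0, xval (a+b'+c+2) hlt, if_pos (by omega), if_pos (by omega)]
              norm_num
            · have hlt1 : iv + 1 < a+(b'+1)+c+2 := by omega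
              have h2 : iv ≤ a+b'+c+1 := by omega
              rw [mulVec_single _ x ⟨iv, hlt⟩ ⟨iv+1, hlt1⟩
                (fun j => by have hj := j.isLt; simp only [thetaAdj, Fin.ext_iff, true_and, false_and, and_true, and_false, or_false, false_or]; omega)]
              rw [xval (iv+1) hlt1, xval iv hlt, if_pos (by omega), if_pos (by omega)]
              norm_num
  · -- the Perron case
    set x : Fin (a+(b'+1)+c+2) → ℝ := fun j =>
      if j.val = 0 then lam^(a+b'+c+4) else
        if j.val ≤ a+1 then lam^(b'+2+j.val) else
          if j.val ≤ a+b'+2 then lam^(j.val) else lam^(j.val+1) with hxd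
    have xval : ∀ (k : ℕ) (hk : k < a+(b'+1)+c+2),
        x ⟨k, hk⟩ = if k = 0 then lam^(a+b'+c+4) else
          if k ≤ a+1 then lam^(b'+2+k) else
            if k ≤ a+b'+2 then lam^k else lam^(k+1) := fun k hk => rfl
    have hxpos : ∀ j, 0 < x j := by
      intro j
      have : x j = if j.val = 0 then lam^(a+b'+c+4) else
          if j.val ≤ a+1 then lam^(b'+2+j.val) else
            if j.val ≤ a+b'+2 then lam^(j.val) else lam^(j.val+1) := rfl
      rw [this]; split_ifs <;> positivity
    refine isComplEig_of _ lam x ?_ ?_ ?_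
    · intro hcon
      have h0 := congrFun hcon ⟨0, hm0⟩
      exact absurd h0 (ne_of_gt (hxpos ⟨0, hm0⟩))
    · intro j; exact le_of_lt (hxpos j)
    · rintro ⟨iv, hlt⟩ _
      by_cases hi0 : iv = 0
      · subst hi0
        rw [mulVec_pair _ x ⟨0, hlt⟩ ⟨1, hm1⟩ ⟨a+2, hm2⟩
          (by simp only [ne_eq, Fin.mk.injEq]; omega)
          (fun j => by have hj := j.isLt; simp only [thetaAdj, Fin.ext_iff, true_and, false_and, and_true, and_false, or_false, false_or]; omega)]
        rw [xval 1 hm1, xval (a+2) hm2, xval 0 hlt,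
          if_neg (by omega : ¬ (1 = 0)), if_pos (by omega : 1 ≤ a+1),
          if_neg (by omega : ¬ (a+2 = 0)), if_neg (by omega : ¬ (a+2 ≤ a+1)),
          if_pos (by omega : a+2 ≤ a+b'+2), if_pos rfl]
        have hkey : lam^c * (lam^(b'+2+1) + lam^(a+2)) = lam^c * (lam * lam^(a+b'+c+4)) := by
          linear_combination -heq
        exact mul_left_cancel₀ (pow_ne_zero c (ne_of_gt hlam)) hkey
      · by_cases hiv : iv = a+1
        · subst hiv
          rcases Nat.eq_zero_or_pos c with hc | hc
          · rw [mulVec_single _ x ⟨a+1, hlt⟩ ⟨0, hm0⟩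
              (fun j => by have hj := j.isLt; have hc' := hc; simp only [thetaAdj, Fin.ext_iff, true_and, false_and, and_true, and_false, or_false, false_or]; omega)]
            rw [xval 0 hm0, xval (a+1) hlt, if_pos rfl,
              if_neg (by omega : ¬ (a+1 = 0)), if_pos (by omega : a+1 ≤ a+1), hc]
            ring
          · have hm3 : a+b'+3 < a+(b'+1)+c+2 := by omega
            rw [mulVec_single _ x ⟨a+1, hlt⟩ ⟨a+b'+3, hm3⟩
              (fun j => by have hj := j.isLt; have hc' := hc; simp only [thetaAdj, Fin.ext_iff, true_and, false_and, and_true, and_false, or_false, false_or]; omega)]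
            rw [xval (a+b'+3) hm3, xval (a+1) hlt,
              if_neg (by omega : ¬ (a+b'+3 = 0)), if_neg (by omega : ¬ (a+b'+3 ≤ a+1)),
              if_neg (by omega : ¬ (a+b'+3 ≤ a+b'+2)),
              if_neg (by omega : ¬ (a+1 = 0)), if_pos (by omega : a+1 ≤ a+1)]
            ring
        · by_cases hmid1 : iv ≤ a
          · have h1 : 1 ≤ iv := by omega
            have hlt1 : iv + 1 < a+(b'+1)+c+2 := by omega
            rw [mulVec_single _ x ⟨iv, hlt⟩ ⟨iv+1, hlt1⟩
              (fun j => by have hj := j.isLt; simp only [thetaAdj, Fin.ext_iff, true_and, false_and, and_true, and_false, or_false, false_or]; omega)]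
            rw [xval (iv+1) hlt1, xval iv hlt,
              if_neg (by omega : ¬ (iv+1 = 0)), if_pos (by omega : iv+1 ≤ a+1),
              if_neg (by omega : ¬ (iv = 0)), if_pos (by omega : iv ≤ a+1)]
            ring
          · by_cases hend : iv = a+b'+2
            · subst hend
              have hlt1 : a+1 < a+(b'+1)+c+2 := by omega
              rw [mulVec_single _ x ⟨a+b'+2, hlt⟩ ⟨a+1, hlt1⟩
                (fun j => by have hj := j.isLt; simp only [thetaAdj, Fin.ext_iff, true_and, false_and, and_true, and_false, or_false, false_or]; omega)]
              rw [xval (a+1) hlt1, xval (a+b'+2) hlt,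
                if_neg (by omega : ¬ (a+1 = 0)), if_pos (by omega : a+1 ≤ a+1),
                if_neg (by omega : ¬ (a+b'+2 = 0)), if_neg (by omega : ¬ (a+b'+2 ≤ a+1)),
                if_pos (by omega : a+b'+2 ≤ a+b'+2)]
              ring
            · by_cases hmid2 : iv ≤ a+b'+1
              · have h1 : a+2 ≤ iv := by omega
                have hlt1 : iv + 1 < a+(b'+1)+c+2 := by omega
                rw [mulVec_single _ x ⟨iv, hlt⟩ ⟨iv+1, hlt1⟩
                  (fun j => by have hj := j.isLt; simp only [thetaAdj, Fin.ext_iff, true_and, false_and, and_true, and_false, or_false, false_or]; omega)]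
                rw [xval (iv+1) hlt1, xval iv hlt,
                  if_neg (by omega : ¬ (iv+1 = 0)), if_neg (by omega : ¬ (iv+1 ≤ a+1)),
                  if_pos (by omega : iv+1 ≤ a+b'+2),
                  if_neg (by omega : ¬ (iv = 0)), if_neg (by omega : ¬ (iv ≤ a+1)),
                  if_pos (by omega : iv ≤ a+b'+2)]
                ring
              · -- iv ≥ a+b'+3, so c ≥ 1
                have hc : 0 < c := by omega
                have h1 : a+b'+3 ≤ iv := by omega
                by_cases hlast : iv = a+b'+c+2
                · subst hlast
                  rw [mulVec_single _ x ⟨a+b'+c+2, hlt⟩ ⟨0, hm0⟩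
                    (fun j => by have hj := j.isLt; have hc' := hc; simp only [thetaAdj, Fin.ext_iff, true_and, false_and, and_true, and_false, or_false, false_or]; omega)]
                  rw [xval 0 hm0, xval (a+b'+c+2) hlt, if_pos rfl,
                    if_neg (by omega : ¬ (a+b'+c+2 = 0)), if_neg (by omega : ¬ (a+b'+c+2 ≤ a+1)),
                    if_neg (by omega : ¬ (a+b'+c+2 ≤ a+b'+2))]
                  ring
                · have hlt1 : iv + 1 < a+(b'+1)+c+2 := by omega
                  have h2 : iv ≤ a+b'+c+1 := by omega
                  rw [mulVec_single _ x ⟨iv, hlt⟩ ⟨iv+1, hlt1⟩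
                    (fun j => by have hj := j.isLt; simp only [thetaAdj, Fin.ext_iff, true_and, false_and, and_true, and_false, or_false, false_or]; omega)]
                  rw [xval (iv+1) hlt1, xval iv hlt,
                    if_neg (by omega : ¬ (iv+1 = 0)), if_neg (by omega : ¬ (iv+1 ≤ a+1)),
                    if_neg (by omega : ¬ (iv+1 ≤ a+b'+2)),
                    if_neg (by omega : ¬ (iv = 0)), if_neg (by omega : ¬ (iv ≤ a+1)),
                    if_neg (by omega : ¬ (iv ≤ a+b'+2))]
                  ring

lemma infty_pi_fwd (r' s' : ℕ) (lam : ℝ)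
    (h : isComplEig (adjMat (inftyAdj (r'+2) (s'+2))) lam) :
    lam = 0 ∨ lam = 1 ∨ (0 < lam ∧ lam ^ (r'+2+(s'+2)) = lam ^ (r'+2) + lam ^ (s'+2)) := by
  obtain ⟨x, hx, hpos, hge, hsum⟩ := h
  have key : ∀ i, x i ≠ 0 → (adjMat (inftyAdj (r'+2) (s'+2))).mulVec x i = lam * x i := by
    intro i hxi
    have hnn : ∀ i ∈ Finset.univ,
        0 ≤ x i * ((adjMat (inftyAdj (r'+2) (s'+2))).mulVec x - lam • x) i :=
      fun i _ => mul_nonneg (hpos i) (hge i)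
    have hz := (Finset.sum_eq_zero_iff_of_nonneg hnn).mp hsum i (Finset.mem_univ i)
    rcases mul_eq_zero.mp hz with h | h
    · exact absurd h hxi
    · simp only [Pi.sub_apply, Pi.smul_apply, smul_eq_mul] at h
      linarith
  rcases lt_trichotomy lam 0 with hlam | hlam | hlam
  · exfalso
    obtain ⟨i, hxi⟩ := Function.ne_iff.mp hx
    have hxi' : 0 < x i := lt_of_le_of_ne (hpos i) (Ne.symm hxi)
    have h1 := key i hxi
    have h2 := mulVec_nonneg (inftyAdj (r'+2) (s'+2)) x hpos i
    nlinarith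
  · exact Or.inl hlam
  set y : ℕ → ℝ := fun j => if h : j < (r'+2+(s'+2)-1) then x ⟨j, h⟩ else 0 with hy
  have hyv : ∀ (j : ℕ) (h : j < (r'+2+(s'+2)-1)), y j = x ⟨j, h⟩ := fun j h => dif_pos h
  have hynn : ∀ j, 0 ≤ y j := by
    intro j; rw [hy]; dsimp only; split
    · exact hpos _
    · exact le_refl 0
  have eqA : ∀ m, 1 ≤ m → m ≤ r' → 0 < y m → y (m+1) = lam * y m := by
    intro m h1 h2 hp
    have hm : m < (r'+2+(s'+2)-1) := by omega
    have hm1 : m + 1 < (r'+2+(s'+2)-1) := by omega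
    have hxm : x ⟨m, hm⟩ ≠ 0 := by rw [← hyv m hm]; exact ne_of_gt hp
    have hk := key ⟨m, hm⟩ hxm
    rw [mulVec_single _ x ⟨m, hm⟩ ⟨m+1, hm1⟩
      (fun j => by have hj := j.isLt; simp only [inftyAdj, Fin.ext_iff, true_and, false_and, and_true, and_false, or_false, false_or]; omega)] at hk
    rw [hyv (m+1) hm1, hyv m hm]
    exact hk
  have eqB : 0 < y (r'+1) → y 0 = lam * y (r'+1) := by
    intro hp
    have hm : r'+1 < (r'+2+(s'+2)-1) := by omega
    have hm0 : 0 < (r'+2+(s'+2)-1) := by omega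
    have hxm : x ⟨r'+1, hm⟩ ≠ 0 := by rw [← hyv _ hm]; exact ne_of_gt hp
    have hk := key ⟨r'+1, hm⟩ hxm
    rw [mulVec_single _ x ⟨r'+1, hm⟩ ⟨0, hm0⟩
      (fun j => by have hj := j.isLt; simp only [inftyAdj, Fin.ext_iff, true_and, false_and, and_true, and_false, or_false, false_or]; omega)] at hk
    rw [hyv 0 hm0, hyv (r'+1) hm]
    exact hk
  have eqC : ∀ m, r'+2 ≤ m → m ≤ r'+s'+1 → 0 < y m → y (m+1) = lam * y m := by
    intro m h1 h2 hp
    have hm : m < (r'+2+(s'+2)-1) := by omega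
    have hm1 : m + 1 < (r'+2+(s'+2)-1) := by omega
    have hxm : x ⟨m, hm⟩ ≠ 0 := by rw [← hyv m hm]; exact ne_of_gt hp
    have hk := key ⟨m, hm⟩ hxm
    rw [mulVec_single _ x ⟨m, hm⟩ ⟨m+1, hm1⟩
      (fun j => by have hj := j.isLt; simp only [inftyAdj, Fin.ext_iff, true_and, false_and, and_true, and_false, or_false, false_or]; omega)] at hk
    rw [hyv (m+1) hm1, hyv m hm]
    exact hk
  have eqD : 0 < y (r'+s'+2) → y 0 = lam * y (r'+s'+2) := by
    intro hp
    have hm : r'+s'+2 < (r'+2+(s'+2)-1) := by omega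
    have hm0 : 0 < (r'+2+(s'+2)-1) := by omega
    have hxm : x ⟨r'+s'+2, hm⟩ ≠ 0 := by rw [← hyv _ hm]; exact ne_of_gt hp
    have hk := key ⟨r'+s'+2, hm⟩ hxm
    rw [mulVec_single _ x ⟨r'+s'+2, hm⟩ ⟨0, hm0⟩
      (fun j => by have hj := j.isLt; simp only [inftyAdj, Fin.ext_iff, true_and, false_and, and_true, and_false, or_false, false_or]; omega)] at hk
    rw [hyv 0 hm0, hyv _ hm]
    exact hk
  have eq0 : 0 < y 0 → lam * y 0 = y 1 + y (r'+2) := by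
    intro hp
    have hm0 : 0 < (r'+2+(s'+2)-1) := by omega
    have hm1 : 1 < (r'+2+(s'+2)-1) := by omega
    have hm2 : r'+2 < (r'+2+(s'+2)-1) := by omega
    have hxm : x ⟨0, hm0⟩ ≠ 0 := by rw [← hyv _ hm0]; exact ne_of_gt hp
    have hk := key ⟨0, hm0⟩ hxm
    rw [mulVec_pair _ x ⟨0, hm0⟩ ⟨1, hm1⟩ ⟨r'+2, hm2⟩
      (by simp only [ne_eq, Fin.mk.injEq]; omega)
      (fun j => by have hj := j.isLt; simp only [inftyAdj, Fin.ext_iff, true_and, false_and, and_true, and_false, or_false, false_or]; omega)] at hk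
    rw [hyv 0 hm0, hyv 1 hm1, hyv (r'+2) hm2]
    linarith [hk]
  have hchain1 : 0 < y 1 → y 0 = lam ^ (r'+1) * y 1 ∧ 0 < y 0 := by
    intro h1
    obtain ⟨hv, hp⟩ := geomPos y lam hlam 1 h1 (r'+1) (by omega)
      (fun j hj1 hj2 hjp => eqA j hj1 (by omega) hjp)
    have hB := eqB hp
    refine ⟨?_, by rw [hB]; positivity⟩
    rw [hB, hv, show r' + 1 - 1 = r' by omega]
    ring
  have hchain2 : 0 < y (r'+2) → y 0 = lam ^ (s'+1) * y (r'+2) ∧ 0 < y 0 := by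
    intro h1
    obtain ⟨hv, hp⟩ := geomPos y lam hlam (r'+2) h1 (r'+s'+2) (by omega)
      (fun j hj1 hj2 hjp => eqC j hj1 (by omega) hjp)
    have hD := eqD hp
    refine ⟨?_, by rw [hD]; positivity⟩
    rw [hD, hv, show r' + s' + 2 - (r' + 2) = s' by omega]
    ring
  have hy0 : 0 < y 0 := by
    obtain ⟨i, hxi⟩ := Function.ne_iff.mp hx
    have hyi : 0 < y i.val := by
      rw [hyv i.val i.isLt, Fin.eta]
      exact lt_of_le_of_ne (hpos i) (Ne.symm hxi)
    by_cases hm0 : i.val = 0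
    · rwa [hm0] at hyi
    by_cases hmr : i.val ≤ r' + 1
    · obtain ⟨_, hp⟩ := geomPos y lam hlam i.val hyi (r'+1) (by omega)
        (fun j hj1 hj2 hjp => eqA j (by omega) (by omega) hjp)
      rw [eqB hp]; positivity
    · have hi := i.isLt
      obtain ⟨_, hp⟩ := geomPos y lam hlam i.val hyi (r'+s'+2) (by omega)
        (fun j hj1 hj2 hjp => eqC j (by omega) (by omega) hjp)
      rw [eqD hp]; positivity
  have heq0 := eq0 hy0
  by_cases h1 : y 1 = 0
  · have hr2 : 0 < y (r'+2) := by nlinarith [hynn (r'+2)]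
    obtain ⟨hv2, _⟩ := hchain2 hr2
    have hfact : (lam ^ (s'+2) - 1) * y (r'+2) = 0 := by
      linear_combination heq0 + h1 - lam * hv2
    have hone : lam ^ (s'+2) = 1 := by
      rcases mul_eq_zero.mp hfact with h | h
      · linarith
      · exact absurd h (ne_of_gt hr2)
    exact Or.inr (Or.inl (pow_eq_one_pos hlam (by omega) hone))
  · have h1p : 0 < y 1 := lt_of_le_of_ne (hynn 1) (Ne.symm h1)
    obtain ⟨hv1, _⟩ := hchain1 h1p
    by_cases h2 : y (r'+2) = 0
    · have hfact : (lam ^ (r'+2) - 1) * y 1 = 0 := by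
        linear_combination heq0 + h2 - lam * hv1
      have hone : lam ^ (r'+2) = 1 := by
        rcases mul_eq_zero.mp hfact with h | h
        · linarith
        · exact absurd h (ne_of_gt h1p)
      exact Or.inr (Or.inl (pow_eq_one_pos hlam (by omega) hone))
    · have h2p : 0 < y (r'+2) := lt_of_le_of_ne (hynn _) (Ne.symm h2)
      obtain ⟨hv2, _⟩ := hchain2 h2p
      refine Or.inr (Or.inr ⟨hlam, ?_⟩)
      have hfact : (lam ^ (r'+2+(s'+2)) - lam ^ (r'+2) - lam ^ (s'+2)) * y 0 = 0 := by
        linear_combination (lam^(r'+s'+3)) * heq0 - lam^(s'+2) * hv1 - lam^(r'+2) * hv2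
      rcases mul_eq_zero.mp hfact with h | h
      · linarith
      · exact absurd h (ne_of_gt hy0)

lemma infty_pi_bwd (r' s' : ℕ) (lam : ℝ)
    (h : lam = 0 ∨ lam = 1 ∨ (0 < lam ∧ lam ^ (r'+2+(s'+2)) = lam ^ (r'+2) + lam ^ (s'+2))) :
    isComplEig (adjMat (inftyAdj (r'+2) (s'+2))) lam := by
  have hm0 : 0 < r'+2+(s'+2)-1 := by omega
  have hm1 : 1 < r'+2+(s'+2)-1 := by omega
  have hm2 : r'+2 < r'+2+(s'+2)-1 := by omega
  rcases h with rfl | rfl | ⟨hlam, heq⟩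
  · -- lam = 0 : indicator of vertex 0
    set x : Fin (r'+2+(s'+2)-1) → ℝ := fun j => if j.val = 0 then 1 else 0 with hxd
    refine isComplEig_of _ 0 x ?_ ?_ ?_
    · intro hcon
      have h0 := congrFun hcon ⟨0, hm0⟩
      have h0' : (1:ℝ) = 0 := h0
      norm_num at h0'
    · intro j
      have : x j = if j.val = 0 then 1 else 0 := rfl
      rw [this]; split <;> norm_num
    · rintro ⟨iv, hlt⟩ hxi
      have hi0 : iv = 0 := by
        by_contra hc
        exact hxi (if_neg hc)
      subst hi0
      rw [mulVec_pair _ x ⟨0, hlt⟩ ⟨1, hm1⟩ ⟨r'+2, hm2⟩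
        (by simp only [ne_eq, Fin.mk.injEq]; omega)
        (fun j => by have hj := j.isLt; simp only [inftyAdj, Fin.ext_iff, true_and, false_and, and_true, and_false, or_false, false_or]; omega)]
      have e1 : x ⟨1, hm1⟩ = 0 := by
        have h' : x ⟨1, hm1⟩ = if (1:ℕ) = 0 then (1:ℝ) else 0 := rfl
        rw [h', if_neg (by omega)]
      have e2 : x ⟨r'+2, hm2⟩ = 0 := by
        have h' : x ⟨r'+2, hm2⟩ = if r'+2 = 0 then (1:ℝ) else 0 := rfl
        rw [h', if_neg (by omega)]
      rw [e1, e2]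
      norm_num
  · -- lam = 1 : indicator of the r-cycle
    set x : Fin (r'+2+(s'+2)-1) → ℝ := fun j => if j.val ≤ r'+1 then 1 else 0 with hxd
    have xval : ∀ (k : ℕ) (hk : k < r'+2+(s'+2)-1),
        x ⟨k, hk⟩ = if k ≤ r'+1 then 1 else 0 := fun k hk => rfl
    refine isComplEig_of _ 1 x ?_ ?_ ?_
    · intro hcon
      have h0 := congrFun hcon ⟨0, hm0⟩
      have h0' : (if (0:ℕ) ≤ r'+1 then (1:ℝ) else 0) = 0 := h0
      rw [if_pos (by omega)] at h0'
      norm_num at h0'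
    · intro j
      have : x j = if j.val ≤ r'+1 then 1 else 0 := rfl
      rw [this]; split <;> norm_num
    · rintro ⟨iv, hlt⟩ hxi
      have hi : iv ≤ r'+1 := by
        by_contra hc
        exact hxi (if_neg hc)
      by_cases hi0 : iv = 0
      · subst hi0
        rw [mulVec_pair _ x ⟨0, hlt⟩ ⟨1, hm1⟩ ⟨r'+2, hm2⟩
          (by simp only [ne_eq, Fin.mk.injEq]; omega)
          (fun j => by have hj := j.isLt; simp only [inftyAdj, Fin.ext_iff, true_and, false_and, and_true, and_false, or_false, false_or]; omega)]
        rw [xval 1 hm1, xval (r'+2) hm2, xval 0 hlt,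
          if_pos (by omega : 1 ≤ r'+1), if_neg (by omega : ¬ (r'+2 ≤ r'+1)),
          if_pos (by omega : 0 ≤ r'+1)]
        norm_num
      · by_cases hir : iv = r'+1
        · subst hir
          rw [mulVec_single _ x ⟨r'+1, hlt⟩ ⟨0, hm0⟩
            (fun j => by have hj := j.isLt; simp only [inftyAdj, Fin.ext_iff, true_and, false_and, and_true, and_false, or_false, false_or]; omega)]
          rw [xval 0 hm0, xval (r'+1) hlt, if_pos (by omega : (0:ℕ) ≤ r'+1),
            if_pos (by omega : r'+1 ≤ r'+1)]
          norm_num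
        · have h1 : 1 ≤ iv := by omega
          have h2 : iv ≤ r' := by omega
          have hlt1 : iv + 1 < r'+2+(s'+2)-1 := by omega
          rw [mulVec_single _ x ⟨iv, hlt⟩ ⟨iv+1, hlt1⟩
            (fun j => by have hj := j.isLt; simp only [inftyAdj, Fin.ext_iff, true_and, false_and, and_true, and_false, or_false, false_or]; omega)]
          rw [xval (iv+1) hlt1, xval iv hlt, if_pos (by omega : iv+1 ≤ r'+1),
            if_pos (by omega : iv ≤ r'+1)]
          norm_num
  · -- the Perron case
    set x : Fin (r'+2+(s'+2)-1) → ℝ := fun j =>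
      if j.val = 0 then lam^(r'+s'+2) else
        if j.val ≤ r'+1 then lam^(s'+j.val) else lam^(j.val-1) with hxd
    have xval : ∀ (k : ℕ) (hk : k < r'+2+(s'+2)-1),
        x ⟨k, hk⟩ = if k = 0 then lam^(r'+s'+2) else
          if k ≤ r'+1 then lam^(s'+k) else lam^(k-1) := fun k hk => rfl
    have hxpos : ∀ j, 0 < x j := by
      intro j
      have : x j = if j.val = 0 then lam^(r'+s'+2) else
          if j.val ≤ r'+1 then lam^(s'+j.val) else lam^(j.val-1) := rfl
      rw [this]; split_ifs <;> positivity
    refine isComplEig_of _ lam x ?_ ?_ ?_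
    · intro hcon
      have h0 := congrFun hcon ⟨0, hm0⟩
      exact absurd h0 (ne_of_gt (hxpos ⟨0, hm0⟩))
    · intro j; exact le_of_lt (hxpos j)
    · rintro ⟨iv, hlt⟩ _
      by_cases hi0 : iv = 0
      · subst hi0
        rw [mulVec_pair _ x ⟨0, hlt⟩ ⟨1, hm1⟩ ⟨r'+2, hm2⟩
          (by simp only [ne_eq, Fin.mk.injEq]; omega)
          (fun j => by have hj := j.isLt; simp only [inftyAdj, Fin.ext_iff, true_and, false_and, and_true, and_false, or_false, false_or]; omega)]
        rw [xval 1 hm1, xval (r'+2) hm2, xval 0 hlt,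
          if_neg (by omega : ¬ (1 = 0)), if_pos (by omega : 1 ≤ r'+1),
          if_neg (by omega : ¬ (r'+2 = 0)), if_neg (by omega : ¬ (r'+2 ≤ r'+1)),
          if_pos rfl]
        have key2 : lam * (lam^(s'+1) + lam^(r'+2-1)) = lam * (lam * lam^(r'+s'+2)) := by
          rw [show r'+2-1 = r'+1 by omega]
          linear_combination (-1 : ℝ) * heq
        exact mul_left_cancel₀ (ne_of_gt hlam) key2
      · by_cases hir : iv = r'+1
        · subst hir
          rw [mulVec_single _ x ⟨r'+1, hlt⟩ ⟨0, hm0⟩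
            (fun j => by have hj := j.isLt; simp only [inftyAdj, Fin.ext_iff, true_and, false_and, and_true, and_false, or_false, false_or]; omega)]
          rw [xval 0 hm0, xval (r'+1) hlt, if_pos rfl, if_neg (by omega : ¬ (r'+1 = 0)),
            if_pos (by omega : r'+1 ≤ r'+1)]
          ring
        · by_cases hmid : iv ≤ r'
          · have h1 : 1 ≤ iv := by omega
            have hlt1 : iv + 1 < r'+2+(s'+2)-1 := by omega
            rw [mulVec_single _ x ⟨iv, hlt⟩ ⟨iv+1, hlt1⟩
              (fun j => by have hj := j.isLt; simp only [inftyAdj, Fin.ext_iff, true_and, false_and, and_true, and_false, or_false, false_or]; omega)]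
            rw [xval (iv+1) hlt1, xval iv hlt, if_neg (by omega : ¬ (iv+1 = 0)),
              if_pos (by omega : iv+1 ≤ r'+1), if_neg (by omega : ¬ (iv = 0)),
              if_pos (by omega : iv ≤ r'+1)]
            ring
          · -- iv ≥ r'+2
            obtain ⟨m, rfl⟩ : ∃ m, iv = m + (r'+2) := ⟨iv - (r'+2), by omega⟩
            by_cases hlast : m + (r'+2) = r'+s'+2
            · rw [mulVec_single _ x ⟨m+(r'+2), hlt⟩ ⟨0, hm0⟩
                (fun j => by have hj := j.isLt; have hm := hlast; simp only [inftyAdj, Fin.ext_iff, true_and, false_and, and_true, and_false, or_false, false_or]; omega)]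
              rw [xval 0 hm0, xval (m+(r'+2)) hlt, if_pos rfl,
                if_neg (by omega : ¬ (m+(r'+2) = 0)), if_neg (by omega : ¬ (m+(r'+2) ≤ r'+1)),
                show m+(r'+2)-1 = r'+s'+1 by omega]
              ring
            · have hlt1 : m+(r'+2)+1 < r'+2+(s'+2)-1 := by omega
              rw [mulVec_single _ x ⟨m+(r'+2), hlt⟩ ⟨m+(r'+2)+1, hlt1⟩
                (fun j => by have hj := j.isLt; have hm' := hlast; simp only [inftyAdj, Fin.ext_iff, true_and, false_and, and_true, and_false, or_false, false_or]; omega)]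
              rw [xval (m+(r'+2)+1) hlt1, xval (m+(r'+2)) hlt,
                if_neg (by omega : ¬ (m+(r'+2)+1 = 0)), if_neg (by omega : ¬ (m+(r'+2)+1 ≤ r'+1)),
                if_neg (by omega : ¬ (m+(r'+2) = 0)), if_neg (by omega : ¬ (m+(r'+2) ≤ r'+1)),
                show m+(r'+2)+1-1 = m+r'+2 by omega, show m+(r'+2)-1 = m+r'+1 by omega]
              ring

theorem stmt14 (r s i : ℕ) (hr : 2 ≤ r) (hrs : r ≤ s)
    (hi1 : 1 ≤ i) (hi2 : i ≤ r - 1) (hi3 : i ≤ s - 2) :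
    {lam : ℝ | isComplEig (adjMat (inftyAdj r s)) lam} =
      {lam : ℝ | isComplEig (adjMat (thetaAdj (r - i - 1) (s - i - 1) (i - 1))) lam} := by
  ext lam
  simp only [Set.mem_setOf_eq]
  obtain ⟨r', rfl⟩ : ∃ r', r = r' + 2 := ⟨r - 2, by omega⟩
  obtain ⟨s', rfl⟩ : ∃ s', s = s' + 2 := ⟨s - 2, by omega⟩
  obtain ⟨b', hb⟩ : ∃ b', s' + 2 - i - 1 = b' + 1 := ⟨s' + 2 - i - 2, by omega⟩
  have e1 : r' + 2 - i - 1 + (i - 1) + 2 = r' + 2 := by omega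
  have e2 : b' + 1 + (i - 1) + 2 = s' + 2 := by omega
  rw [hb]
  constructor
  · intro h
    have h1 := infty_pi_fwd r' s' lam h
    refine theta_pi_bwd _ _ _ _ ?_
    rw [e1, e2]
    exact h1
  · intro h
    have h1 := theta_pi_fwd (r' + 2 - i - 1) b' (i - 1) lam h
    rw [e1, e2] at h1
    exact infty_pi_bwd r' s' lam h1
end

section
/- For every integer r ≥ 2, the digraphs ∞(r, 5r) and ∞(2r, 3r) have the same complementarity spectrum: Π(∞(r,5r)) = Π(∞(2r,3r)). -/
open Matrix Polynomial

lemma sum_ite_pair {n : ℕ} (x : Fin n → ℝ) (a b : Fin n) (hab : a ≠ b) :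
    ∑ j, (if j = a ∨ j = b then x j else 0) = x a + x b := by
  classical
  have h : ∀ j : Fin n, (if j = a ∨ j = b then x j else 0)
      = (if j = a then x j else 0) + (if j = b then x j else 0) := by
    intro j
    by_cases h1 : j = a <;> by_cases h2 : j = b
    · exact absurd (h1.symm.trans h2) hab
    · simp only [h1]; simp [hab]
    · simp only [h2]; simp [Ne.symm hab]
    · simp [h1, h2]
  rw [Finset.sum_congr rfl fun j _ => h j, Finset.sum_add_distrib]
  simp [Finset.sum_ite_eq']

lemma sum_ite_single {n : ℕ} (x : Fin n → ℝ) (a : Fin n) :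
    ∑ j, (if j = a then x j else 0) = x a := by
  classical
  simp [Finset.sum_ite_eq']

lemma mulVec_adj_s15 {r s : ℕ} (hr : 2 ≤ r) (hs : 2 ≤ s) (x : Fin (r + s - 1) → ℝ)
    (i : Fin (r + s - 1)) :
    (adjMat (inftyAdj r s)).mulVec x i =
      if i.val = 0 then x ⟨1, by omega⟩ + x ⟨r, by omega⟩
      else if i.val = r - 1 ∨ i.val = r + s - 2 then x ⟨0, by omega⟩
      else x ⟨(i.val + 1) % (r + s - 1), Nat.mod_lt _ (by omega)⟩ := by
  classical
  have hi := i.isLt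
  have hsum : (adjMat (inftyAdj r s)).mulVec x i
      = ∑ j : Fin (r + s - 1), (if inftyAdj r s i j then x j else 0) := by
    simp [Matrix.mulVec, dotProduct, adjMat, ite_mul]
  rw [hsum]
  by_cases h0 : i.val = 0
  · rw [if_pos h0]
    have hiff : ∀ j : Fin (r + s - 1),
        inftyAdj r s i j ↔ (j = (⟨1, by omega⟩ : Fin (r+s-1)) ∨ j = ⟨r, by omega⟩) := by
      intro j
      have hj := j.isLt
      simp only [inftyAdj, Fin.ext_iff]
      omega
    rw [Finset.sum_congr rfl fun j _ => if_congr (hiff j) rfl rfl]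
    exact sum_ite_pair x _ _ (by simp [Fin.ext_iff]; omega)
  · rw [if_neg h0]
    by_cases h1 : i.val = r - 1 ∨ i.val = r + s - 2
    · rw [if_pos h1]
      have hiff : ∀ j : Fin (r + s - 1),
          inftyAdj r s i j ↔ j = (⟨0, by omega⟩ : Fin (r+s-1)) := by
        intro j
        have hj := j.isLt
        simp only [inftyAdj, Fin.ext_iff]
        omega
      rw [Finset.sum_congr rfl fun j _ => if_congr (hiff j) rfl rfl]
      exact sum_ite_single x _
    · rw [if_neg h1]
      push_neg at h1
      have hmod : (i.val + 1) % (r + s - 1) = i.val + 1 := Nat.mod_eq_of_lt (by omega)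
      have hiff : ∀ j : Fin (r + s - 1),
          inftyAdj r s i j ↔ j = (⟨(i.val + 1) % (r+s-1), Nat.mod_lt _ (by omega)⟩ : Fin (r+s-1)) := by
        intro j
        have hj := j.isLt
        simp only [inftyAdj, Fin.ext_iff, hmod]
        omega
      rw [Finset.sum_congr rfl fun j _ => if_congr (hiff j) rfl rfl]
      exact sum_ite_single x _

lemma isComplEig_of_s15 {V : Type*} [Fintype V] (A : Matrix V V ℝ) (lam : ℝ) (x : V → ℝ)
    (h0 : x ≠ 0) (h1 : ∀ i, 0 ≤ x i) (h2 : ∀ i, lam * x i ≤ A.mulVec x i)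
    (h3 : ∀ i, x i ≠ 0 → A.mulVec x i = lam * x i) : isComplEig A lam := by
  refine ⟨x, h0, ?_, ?_, ?_⟩
  · intro i; simpa using h1 i
  · intro i
    simp only [Pi.sub_apply, Pi.smul_apply, smul_eq_mul, Pi.zero_apply]
    have := h2 i; linarith
  · refine Finset.sum_eq_zero fun i _ => ?_
    by_cases h : x i = 0
    · simp [h]
    · simp [Pi.sub_apply, Pi.smul_apply, smul_eq_mul, h3 i h]

lemma complEig_props {V : Type*} [Fintype V] {A : Matrix V V ℝ} {lam : ℝ}
    (h : isComplEig A lam) :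
    ∃ x : V → ℝ, x ≠ 0 ∧ (∀ i, 0 ≤ x i) ∧ (∀ i, lam * x i ≤ A.mulVec x i) ∧
      (∀ i, 0 < x i → A.mulVec x i = lam * x i) := by
  obtain ⟨x, hne, hnn, hge, hsum⟩ := h
  have hnn' : ∀ i, 0 ≤ x i := fun i => by simpa using (Pi.le_def.mp hnn i)
  have hge' : ∀ i, lam * x i ≤ A.mulVec x i := by
    intro i
    have := Pi.le_def.mp hge i
    simp only [Pi.sub_apply, Pi.smul_apply, smul_eq_mul, Pi.zero_apply] at this
    linarith
  refine ⟨x, hne, hnn', hge', ?_⟩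
  intro i hi
  have hterm : ∀ j ∈ Finset.univ, 0 ≤ x j * (A.mulVec x - lam • x) j := by
    intro j _
    apply mul_nonneg (hnn' j)
    simp only [Pi.sub_apply, Pi.smul_apply, smul_eq_mul]
    linarith [hge' j]
  have hzero := (Finset.sum_eq_zero_iff_of_nonneg hterm).mp hsum i (Finset.mem_univ i)
  simp only [Pi.sub_apply, Pi.smul_apply, smul_eq_mul] at hzero
  rcases mul_eq_zero.mp hzero with h1 | h1
  · exact absurd h1 (ne_of_gt hi)
  · linarith

lemma mulVec_adj_nonneg {r s : ℕ} (hr : 2 ≤ r) (hs : 2 ≤ s) (x : Fin (r + s - 1) → ℝ)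
    (hx : ∀ j, 0 ≤ x j) (i : Fin (r + s - 1)) :
    0 ≤ (adjMat (inftyAdj r s)).mulVec x i := by
  rw [mulVec_adj_s15 hr hs]
  split_ifs
  · exact add_nonneg (hx _) (hx _)
  · exact hx _
  · exact hx _

lemma mulVec_mk_zero {r s : ℕ} (hr : 2 ≤ r) (hs : 2 ≤ s) (x : Fin (r + s - 1) → ℝ)
    (h0 : 0 < r + s - 1) :
    (adjMat (inftyAdj r s)).mulVec x ⟨0, h0⟩ = x ⟨1, by omega⟩ + x ⟨r, by omega⟩ := by
  rw [mulVec_adj_s15 hr hs]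
  simp

lemma mulVec_mk_back {r s : ℕ} (hr : 2 ≤ r) (hs : 2 ≤ s) (x : Fin (r + s - 1) → ℝ)
    (v : ℕ) (hv : v < r + s - 1) (hv0 : v ≠ 0) (hcond : v = r - 1 ∨ v = r + s - 2) :
    (adjMat (inftyAdj r s)).mulVec x ⟨v, hv⟩ = x ⟨0, by omega⟩ := by
  rw [mulVec_adj_s15 hr hs]
  simp only [Fin.val_mk]
  rw [if_neg hv0, if_pos hcond]

lemma mulVec_mk_mid {r s : ℕ} (hr : 2 ≤ r) (hs : 2 ≤ s) (x : Fin (r + s - 1) → ℝ)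
    (v : ℕ) (hv : v + 1 < r + s - 1) (h0 : v ≠ 0) (h1 : v ≠ r - 1) :
    (adjMat (inftyAdj r s)).mulVec x ⟨v, by omega⟩ = x ⟨v + 1, hv⟩ := by
  rw [mulVec_adj_s15 hr hs]
  simp only [Fin.val_mk]
  rw [if_neg h0, if_neg (by omega : ¬(v = r - 1 ∨ v = r + s - 2))]
  exact congrArg x (Fin.ext (Nat.mod_eq_of_lt hv))

set_option maxHeartbeats 4000000 in
lemma charPi_forward {r s : ℕ} (hr : 2 ≤ r) (hs : 2 ≤ s) (lam : ℝ)
    (h : isComplEig (adjMat (inftyAdj r s)) lam) :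
    lam = 0 ∨ lam = 1 ∨ (0 < lam ∧ lam ^ (r + s) = lam ^ s + lam ^ r) := by
  have pw : ∀ (t : ℝ) (k : ℕ), 1 ≤ k → t * t ^ (k - 1) = t ^ k := by
    intro t k hk
    conv_rhs => rw [show k = (k - 1) + 1 by omega]
    rw [pow_succ]; ring
  obtain ⟨x, hne, hnn, hge, heq⟩ := complEig_props h
  by_cases hlam0 : lam = 0
  · exact Or.inl hlam0
  right
  obtain ⟨i0, hi0⟩ : ∃ i, 0 < x i := by
    by_contra hc; push_neg at hc
    exact hne (funext fun i => le_antisymm (hc i) (hnn i))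
  have hlampos : 0 < lam := by
    have h1 := heq i0 hi0
    have h2 := mulVec_adj_nonneg hr hs x hnn i0
    rcases lt_trichotomy lam 0 with h | h | h
    · nlinarith
    · exact absurd h hlam0
    · exact h
  have xcast : ∀ (a b : ℕ) (ha : a < r + s - 1) (hb : b < r + s - 1), a = b →
      x ⟨a, ha⟩ = x ⟨b, hb⟩ := by
    intro a b ha hb h; subst h; rfl
  have hn0 : 0 < r + s - 1 := by omega
  have hn1 : 1 < r + s - 1 := by omega
  have hnr : r < r + s - 1 := by omega
  -- propagation along cycle A
  have PA : ∀ m, m ≤ r - 2 → ∀ (hk : r - 1 - m < r + s - 1), 0 < x ⟨r - 1 - m, hk⟩ →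
      x ⟨0, hn0⟩ = lam ^ (m + 1) * x ⟨r - 1 - m, hk⟩ := by
    intro m
    induction m with
    | zero =>
      intro _ hk hpos
      have e := heq ⟨r - 1 - 0, hk⟩ hpos
      rw [mulVec_mk_back hr hs x _ hk (by omega) (by omega)] at e
      rw [pow_one]
      exact e
    | succ m ih =>
      intro hm hk hpos
      have e := heq ⟨r - 1 - (m + 1), hk⟩ hpos
      rw [mulVec_mk_mid hr hs x _ (by omega) (by omega) (by omega)] at e
      have e' : x ⟨r - 1 - m, by omega⟩ = lam * x ⟨r - 1 - (m + 1), hk⟩ :=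
        (xcast _ _ (by omega) (by omega) (by omega)).trans e
      have hpos' : 0 < x ⟨r - 1 - m, by omega⟩ := by
        rw [e']; exact mul_pos hlampos hpos
      have hstep := ih (by omega) (by omega) hpos'
      calc x ⟨0, hn0⟩ = lam ^ (m + 1) * x ⟨r - 1 - m, by omega⟩ := hstep
        _ = lam ^ (m + 1) * (lam * x ⟨r - 1 - (m + 1), hk⟩) := by rw [e']
        _ = lam ^ (m + 1 + 1) * x ⟨r - 1 - (m + 1), hk⟩ := by ring
  -- propagation along cycle B
  have PB : ∀ m, m ≤ s - 2 → ∀ (hk : r + s - 2 - m < r + s - 1), 0 < x ⟨r + s - 2 - m, hk⟩ →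
      x ⟨0, hn0⟩ = lam ^ (m + 1) * x ⟨r + s - 2 - m, hk⟩ := by
    intro m
    induction m with
    | zero =>
      intro _ hk hpos
      have e := heq ⟨r + s - 2 - 0, hk⟩ hpos
      rw [mulVec_mk_back hr hs x _ hk (by omega) (by omega)] at e
      rw [pow_one]
      exact e
    | succ m ih =>
      intro hm hk hpos
      have e := heq ⟨r + s - 2 - (m + 1), hk⟩ hpos
      rw [mulVec_mk_mid hr hs x _ (by omega) (by omega) (by omega)] at e
      have e' : x ⟨r + s - 2 - m, by omega⟩ = lam * x ⟨r + s - 2 - (m + 1), hk⟩ :=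
        (xcast _ _ (by omega) (by omega) (by omega)).trans e
      have hpos' : 0 < x ⟨r + s - 2 - m, by omega⟩ := by
        rw [e']; exact mul_pos hlampos hpos
      have hstep := ih (by omega) (by omega) hpos'
      calc x ⟨0, hn0⟩ = lam ^ (m + 1) * x ⟨r + s - 2 - m, by omega⟩ := hstep
        _ = lam ^ (m + 1) * (lam * x ⟨r + s - 2 - (m + 1), hk⟩) := by rw [e']
        _ = lam ^ (m + 1 + 1) * x ⟨r + s - 2 - (m + 1), hk⟩ := by ring
  -- x is positive at the coalescence vertex 0
  have hx0 : 0 < x ⟨0, hn0⟩ := by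
    by_cases h0 : i0.val = 0
    · have hi : i0 = ⟨0, hn0⟩ := Fin.ext h0
      rwa [hi] at hi0
    by_cases hA : i0.val ≤ r - 1
    · have hi : (⟨r - 1 - (r - 1 - i0.val), by omega⟩ : Fin (r + s - 1)) = i0 :=
        Fin.ext (by simp only [Fin.val_mk]; omega)
      have := PA (r - 1 - i0.val) (by omega) (by omega) (by rw [hi]; exact hi0)
      rw [this, hi]
      exact mul_pos (pow_pos hlampos _) hi0
    · have hlt := i0.isLt
      have hi : (⟨r + s - 2 - (r + s - 2 - i0.val), by omega⟩ : Fin (r + s - 1)) = i0 :=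
        Fin.ext (by simp only [Fin.val_mk]; omega)
      have := PB (r + s - 2 - i0.val) (by omega) (by omega) (by rw [hi]; exact hi0)
      rw [this, hi]
      exact mul_pos (pow_pos hlampos _) hi0
  have h0eq := heq ⟨0, hn0⟩ hx0
  rw [mulVec_mk_zero hr hs] at h0eq
  -- h0eq : x ⟨1,_⟩ + x ⟨r,_⟩ = lam * x ⟨0,_⟩
  have hc1 : (⟨r - 1 - (r - 2), by omega⟩ : Fin (r + s - 1)) = ⟨1, hn1⟩ :=
    Fin.ext (by simp only [Fin.val_mk]; omega)
  have hcr : (⟨r + s - 2 - (s - 2), by omega⟩ : Fin (r + s - 1)) = ⟨r, hnr⟩ :=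
    Fin.ext (by simp only [Fin.val_mk]; omega)
  have lam_eq_one_of_pow : ∀ k : ℕ, 1 ≤ k → lam ^ k = 1 → lam = 1 := by
    intro k hk hpow
    rcases lt_trichotomy lam 1 with h | h | h
    · have := pow_lt_one₀ (le_of_lt hlampos) h (Nat.one_le_iff_ne_zero.mp hk)
      linarith
    · exact h
    · have := one_lt_pow₀ h (Nat.one_le_iff_ne_zero.mp hk)
      linarith
  have hnn1 := hnn ⟨1, hn1⟩
  have hnnr := hnn ⟨r, hnr⟩
  have eA' : 0 < x ⟨1, hn1⟩ → x ⟨0, hn0⟩ = lam ^ (r - 1) * x ⟨1, hn1⟩ := by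
    intro hp
    have eA := PA (r - 2) le_rfl (by omega) (by rw [hc1]; exact hp)
    simp only [hc1] at eA
    simpa only [show r - 2 + 1 = r - 1 by omega] using eA
  have eB' : 0 < x ⟨r, hnr⟩ → x ⟨0, hn0⟩ = lam ^ (s - 1) * x ⟨r, hnr⟩ := by
    intro hp
    have eB := PB (s - 2) le_rfl (by omega) (by rw [hcr]; exact hp)
    simp only [hcr] at eB
    simpa only [show s - 2 + 1 = s - 1 by omega] using eB
  clear hc1 hcr heq hge hne hi0 PA PB
  revert hx0 h0eq hnn1 hnnr eA' eB'
  generalize x ⟨0, hn0⟩ = x0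
  generalize x ⟨1, hn1⟩ = x1
  generalize x ⟨r, hnr⟩ = xr
  intro hx0 h0eq hnn1 hnnr eA' eB'
  -- now pure real-number reasoning
  rcases hnn1.lt_or_eq with h1 | h1 <;> rcases hnnr.lt_or_eq with hr1 | hr1
  · -- both positive: the eigenvalue equation
    right
    refine ⟨hlampos, ?_⟩
    have eA := eA' h1
    have eB := eB' hr1
    have hsplit : lam ^ (r + s - 1) = lam ^ (r - 1) * lam ^ (s - 1) * lam := by
      rw [← pow_add, ← pow_succ]
      congr 1; omega
    have key : lam ^ (r + s - 1) * x0 = (lam ^ (s - 1) + lam ^ (r - 1)) * x0 := by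
      calc lam ^ (r + s - 1) * x0
          = lam ^ (r - 1) * lam ^ (s - 1) * (lam * x0) := by rw [hsplit]; ring
        _ = lam ^ (r - 1) * lam ^ (s - 1) * (x1 + xr) := by rw [h0eq]
        _ = lam ^ (s - 1) * (lam ^ (r - 1) * x1) + lam ^ (r - 1) * (lam ^ (s - 1) * xr) := by
            ring
        _ = (lam ^ (s - 1) + lam ^ (r - 1)) * x0 := by rw [← eA, ← eB]; ring
    have key2 := mul_right_cancel₀ (ne_of_gt hx0) key
    have hmul : lam * lam ^ (r + s - 1) = lam * (lam ^ (s - 1) + lam ^ (r - 1)) := by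
      rw [key2]
    calc lam ^ (r + s) = lam * lam ^ (r + s - 1) := (pw lam (r + s) (by omega)).symm
      _ = lam * (lam ^ (s - 1) + lam ^ (r - 1)) := hmul
      _ = lam * lam ^ (s - 1) + lam * lam ^ (r - 1) := by ring
      _ = lam ^ s + lam ^ r := by rw [pw lam s (by omega), pw lam r (by omega)]
  · -- x1 > 0, xr = 0 : lam = 1 via cycle A
    left
    have eA := eA' h1
    have hx1 : x1 = lam * x0 := by linarith
    have hkey : lam ^ r * x0 = 1 * x0 := by
      rw [one_mul]
      calc lam ^ r * x0 = lam ^ (r - 1) * (lam * x0) := by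
            rw [← pw lam r (by omega)]; ring
        _ = lam ^ (r - 1) * x1 := by rw [← hx1]
        _ = x0 := eA.symm
    exact lam_eq_one_of_pow r (by omega) (mul_right_cancel₀ (ne_of_gt hx0) hkey)
  · -- x1 = 0, xr > 0 : lam = 1 via cycle B
    left
    have eB := eB' hr1
    have hxr : xr = lam * x0 := by linarith
    have hkey : lam ^ s * x0 = 1 * x0 := by
      rw [one_mul]
      calc lam ^ s * x0 = lam ^ (s - 1) * (lam * x0) := by
            rw [← pw lam s (by omega)]; ring
        _ = lam ^ (s - 1) * xr := by rw [← hxr]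
        _ = x0 := eB.symm
    exact lam_eq_one_of_pow s (by omega) (mul_right_cancel₀ (ne_of_gt hx0) hkey)
  · -- both zero: contradiction
    exfalso
    nlinarith [mul_pos hlampos hx0]

noncomputable def vZero (r s : ℕ) : Fin (r + s - 1) → ℝ :=
  fun j => if j.val = 1 then 1 else 0

noncomputable def vOne (r s : ℕ) : Fin (r + s - 1) → ℝ :=
  fun j => if j.val < r then 1 else 0

noncomputable def vRho (lam : ℝ) (r s : ℕ) : Fin (r + s - 1) → ℝ :=
  fun j => if j.val = 0 then lam ^ (r + s - 2)
    else if j.val < r then lam ^ (s - 2 + j.val) else lam ^ (j.val - 1)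

lemma vZero_mk (r s v : ℕ) (hv : v < r + s - 1) :
    vZero r s ⟨v, hv⟩ = if v = 1 then 1 else 0 := rfl

lemma vOne_mk (r s v : ℕ) (hv : v < r + s - 1) :
    vOne r s ⟨v, hv⟩ = if v < r then 1 else 0 := rfl

lemma vRho_mk (lam : ℝ) (r s v : ℕ) (hv : v < r + s - 1) :
    vRho lam r s ⟨v, hv⟩ = if v = 0 then lam ^ (r + s - 2)
      else if v < r then lam ^ (s - 2 + v) else lam ^ (v - 1) := rfl

lemma charPi_zero {r s : ℕ} (hr : 2 ≤ r) (hs : 2 ≤ s) :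
    isComplEig (adjMat (inftyAdj r s)) 0 := by
  refine isComplEig_of_s15 _ 0 (vZero r s) ?_ ?_ ?_ ?_
  · intro h
    have := congrFun h ⟨1, by omega⟩
    rw [vZero_mk, if_pos rfl] at this
    simpa using this
  · intro i
    rcases i with ⟨v, hv⟩
    rw [vZero_mk]
    split_ifs <;> norm_num
  · intro i
    rw [zero_mul]
    refine mulVec_adj_nonneg hr hs _ ?_ i
    intro j
    rcases j with ⟨v, hv⟩
    rw [vZero_mk]
    split_ifs <;> norm_num
  · intro i hxi
    rcases i with ⟨v, hv⟩
    rw [vZero_mk] at hxi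
    have hv1 : v = 1 := by
      by_contra hc
      rw [if_neg hc] at hxi
      exact hxi rfl
    subst hv1
    rw [zero_mul]
    by_cases hb : (1 : ℕ) = r - 1
    · rw [mulVec_mk_back hr hs _ 1 hv (by omega) (Or.inl hb), vZero_mk, if_neg (by omega)]
    · rw [mulVec_mk_mid hr hs _ 1 (by omega) (by omega) hb, vZero_mk, if_neg (by omega)]

lemma charPi_one {r s : ℕ} (hr : 2 ≤ r) (hs : 2 ≤ s) :
    isComplEig (adjMat (inftyAdj r s)) 1 := by
  have hval : ∀ i, (adjMat (inftyAdj r s)).mulVec (vOne r s) i = 1 * vOne r s i ∨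
      (vOne r s i = 0 ∧ 0 ≤ (adjMat (inftyAdj r s)).mulVec (vOne r s) i) := by
    intro i
    rcases i with ⟨v, hv⟩
    by_cases hv0 : v = 0
    · subst hv0
      left
      rw [mulVec_mk_zero hr hs, vOne_mk, vOne_mk, vOne_mk,
        if_pos (by omega), if_neg (by omega), if_pos (by omega)]
      norm_num
    by_cases hb : v = r - 1 ∨ v = r + s - 2
    · rw [mulVec_mk_back hr hs _ v hv hv0 hb, vOne_mk, vOne_mk, if_pos (by omega)]
      rcases hb with hb | hb
      · left; rw [if_pos (by omega)]; norm_num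
      · right
        constructor
        · rw [if_neg (by omega)]
        · norm_num
    · push_neg at hb
      rw [mulVec_mk_mid hr hs _ v (by omega) hv0 hb.1, vOne_mk, vOne_mk]
      by_cases hlt : v < r
      · left
        rw [if_pos (by omega), if_pos (by omega)]
        norm_num
      · right
        constructor
        · rw [if_neg (by omega)]
        · split_ifs <;> norm_num
  refine isComplEig_of_s15 _ 1 (vOne r s) ?_ ?_ ?_ ?_
  · intro h
    have := congrFun h ⟨0, by omega⟩
    rw [vOne_mk, if_pos (by omega)] at this
    simpa using this
  · intro i
    rcases i with ⟨v, hv⟩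
    rw [vOne_mk]
    split_ifs <;> norm_num
  · intro i
    rcases hval i with h | ⟨h1, h2⟩
    · exact le_of_eq h.symm
    · rw [h1, mul_zero]; exact h2
  · intro i hxi
    rcases hval i with h | ⟨h1, h2⟩
    · exact h.symm ▸ rfl
    · exact absurd h1 hxi

lemma charPi_rho {r s : ℕ} (hr : 2 ≤ r) (hs : 2 ≤ s) {lam : ℝ} (hpos : 0 < lam)
    (hEq : lam ^ (r + s) = lam ^ s + lam ^ r) :
    isComplEig (adjMat (inftyAdj r s)) lam := by
  have pw : ∀ (t : ℝ) (k : ℕ), 1 ≤ k → t * t ^ (k - 1) = t ^ k := by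
    intro t k hk
    conv_rhs => rw [show k = (k - 1) + 1 by omega]
    rw [pow_succ]; ring
  have hfact : lam ^ (s - 1) + lam ^ (r - 1) = lam * lam ^ (r + s - 2) := by
    have hl : lam ≠ 0 := ne_of_gt hpos
    have h2 : lam * (lam ^ (s - 1) + lam ^ (r - 1)) = lam * (lam * lam ^ (r + s - 2)) := by
      rw [mul_add, pw lam s (by omega), pw lam r (by omega)]
      calc lam ^ s + lam ^ r = lam ^ (r + s) := hEq.symm
        _ = lam * (lam * lam ^ (r + s - 2)) := by
            have h3 : lam * (lam * lam ^ (r + s - 2)) = lam ^ (2 + (r + s - 2)) := by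
              rw [pow_add]; ring
            rw [h3]; congr 1; omega
    exact mul_left_cancel₀ hl h2
  have hval : ∀ i, (adjMat (inftyAdj r s)).mulVec (vRho lam r s) i = lam * vRho lam r s i := by
    intro i
    rcases i with ⟨v, hv⟩
    by_cases hv0 : v = 0
    · subst hv0
      have v1 : vRho lam r s ⟨1, by omega⟩ = lam ^ (s - 1) := by
        rw [vRho_mk, if_neg (by omega), if_pos (by omega), show s - 2 + 1 = s - 1 by omega]
      have vr : vRho lam r s ⟨r, by omega⟩ = lam ^ (r - 1) := by
        rw [vRho_mk, if_neg (by omega), if_neg (by omega)]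
      have v0 : vRho lam r s ⟨0, by omega⟩ = lam ^ (r + s - 2) := by
        rw [vRho_mk, if_pos rfl]
      rw [mulVec_mk_zero hr hs, v1, vr, v0]
      exact hfact
    by_cases hb : v = r - 1 ∨ v = r + s - 2
    · rw [mulVec_mk_back hr hs _ v hv hv0 hb, vRho_mk, if_pos rfl, vRho_mk, if_neg hv0]
      rcases hb with hb | hb
      · rw [if_pos (by omega), show s - 2 + v = r + s - 2 - 1 by omega,
          pw lam (r + s - 2) (by omega)]
      · rw [if_neg (by omega), show v - 1 = r + s - 2 - 1 by omega,
          pw lam (r + s - 2) (by omega)]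
    · push_neg at hb
      rw [mulVec_mk_mid hr hs _ v (by omega) hv0 hb.1, vRho_mk, if_neg (by omega),
        vRho_mk, if_neg hv0]
      by_cases hlt : v < r
      · rw [if_pos (by omega), if_pos (by omega),
          show s - 2 + (v + 1) = (s - 2 + v) + 1 by omega, pow_succ]
        ring
      · rw [if_neg (by omega), if_neg (by omega), show v + 1 - 1 = v by omega]
        conv_lhs => rw [show v = (v - 1) + 1 by omega]
        rw [pow_succ]
        ring
  refine isComplEig_of_s15 _ lam (vRho lam r s) ?_ ?_ ?_ ?_
  · intro h
    have := congrFun h ⟨0, by omega⟩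
    rw [vRho_mk, if_pos rfl] at this
    simp only [Pi.zero_apply] at this
    exact absurd this (ne_of_gt (pow_pos hpos _))
  · intro i
    rcases i with ⟨v, hv⟩
    rw [vRho_mk]
    split_ifs <;> exact le_of_lt (pow_pos hpos _)
  · intro i
    exact le_of_eq (hval i).symm
  · intro i _
    exact hval i

lemma charPi {r s : ℕ} (hr : 2 ≤ r) (hs : 2 ≤ s) (lam : ℝ) :
    isComplEig (adjMat (inftyAdj r s)) lam ↔
      lam = 0 ∨ lam = 1 ∨ (0 < lam ∧ lam ^ (r + s) = lam ^ s + lam ^ r) := by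
  constructor
  · exact charPi_forward hr hs lam
  · rintro (rfl | rfl | ⟨hpos, hEq⟩)
    · exact charPi_zero hr hs
    · exact charPi_one hr hs
    · exact charPi_rho hr hs hpos hEq

theorem stmt15 (r : ℕ) (hr : 2 ≤ r) :
    {lam : ℝ | isComplEig (adjMat (inftyAdj r (5 * r))) lam} =
      {lam : ℝ | isComplEig (adjMat (inftyAdj (2 * r) (3 * r))) lam} := by
  ext lam
  simp only [Set.mem_setOf_eq]
  rw [charPi hr (by omega), charPi (by omega) (by omega)]
  have hq : ∀ y : ℝ, 0 < y^2 - y + 1 := by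
    intro y; nlinarith [sq_nonneg (2*y - 1)]
  constructor
  · rintro (h | h | ⟨h1, h2⟩)
    · exact Or.inl h
    · exact Or.inr (Or.inl h)
    · refine Or.inr (Or.inr ⟨h1, ?_⟩)
      rw [show r + 5*r = r*6 by ring, show 5*r = r*5 by ring, pow_mul, pow_mul] at h2
      set y := lam ^ r with hy
      have hy0 : 0 < y := pow_pos h1 r
      have hcube : y^3 = y + 1 := by
        have hfac : y * ((y^2 - y + 1) * (y^3 - y - 1)) = 0 := by linear_combination h2
        rcases mul_eq_zero.mp hfac with h | h
        · exact absurd h (ne_of_gt hy0)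
        rcases mul_eq_zero.mp h with h | h
        · have := hq y; linarith
        · linarith
      rw [show 2*r + 3*r = r*5 by ring, show 3*r = r*3 by ring, show 2*r = r*2 by ring,
        pow_mul, pow_mul, pow_mul, ← hy]
      linear_combination (y^2) * hcube
  · rintro (h | h | ⟨h1, h2⟩)
    · exact Or.inl h
    · exact Or.inr (Or.inl h)
    · refine Or.inr (Or.inr ⟨h1, ?_⟩)
      rw [show 2*r + 3*r = r*5 by ring, show 3*r = r*3 by ring, show 2*r = r*2 by ring,
        pow_mul, pow_mul, pow_mul] at h2
      set y := lam ^ r with hy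
      have hy0 : 0 < y := pow_pos h1 r
      have hcube : y^3 = y + 1 := by
        have hfac : y^2 * (y^3 - y - 1) = 0 := by linear_combination h2
        rcases mul_eq_zero.mp hfac with h | h
        · nlinarith
        · linarith
      rw [show r + 5*r = r*6 by ring, show 5*r = r*5 by ring, pow_mul, pow_mul, ← hy]
      linear_combination (y^3 - y^2 + y) * hcube
end

section
/- For all integers r, s ≥ 2, the characteristic polynomial of the adjacency matrix of the digraph ∞̂(r,s) equals X^n − X^{n−r} − X^{n−s} − 1, where n = r + s − 1. -/
open Matrix Polynomial

/-- Arc relation of the digraph `∞̂(r,s)`: the digraph `∞(r,s)` together with the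
additional arc `(r-1, r)`. -/
def inftyHatAdj (r s : ℕ) : Fin (r + s - 1) → Fin (r + s - 1) → Prop := fun i j =>
  inftyAdj r s i j ∨ (i.val = r - 1 ∧ j.val = r)

lemma mod_helper (a n : ℕ) (h : a < n) : (a+1) % n = if a + 1 = n then 0 else a + 1 := by
  split_ifs with h1
  · rw [h1, Nat.mod_self]
  · exact Nat.mod_eq_of_lt (by omega)

noncomputable def Mcyc (n : ℕ) : Matrix (Fin n) (Fin n) ℝ[X] :=
  Matrix.of fun i j => (if i = j then X else 0) - (if j.val = (i.val + 1) % n then 1 else 0)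

lemma Mcyc_apply (n : ℕ) (i j : Fin n) :
    Mcyc n i j = (if i = j then X else 0) - (if j.val = (i.val + 1) % n then 1 else 0) := rfl

lemma Mcyc_apply' (n : ℕ) (i j : Fin n) :
    Mcyc n i j = (if i.val = j.val then X else 0)
      - (if j.val = (i.val + 1) % n then 1 else 0) := by
  rw [Mcyc_apply]
  by_cases h : i = j
  · rw [if_pos h, if_pos (congrArg Fin.val h)]
  · rw [if_neg h, if_neg (fun hv => h (Fin.ext hv))]

lemma minor0 (k : ℕ) :
    ((Mcyc (k+2)).submatrix (Fin.succAbove 0) Fin.succ).det = X ^ (k+1) := by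
  have key : ∀ i j : Fin (k+1),
      ((Mcyc (k+2)).submatrix (Fin.succAbove 0) Fin.succ) i j
        = (if i.val = j.val then X else 0)
          - (if (j.val + 1 = i.val + 2 ∧ i.val + 2 < k + 2) then 1 else 0) := by
    intro i j
    have h1 : ((Fin.succAbove 0 i : Fin (k+2)) : ℕ) = i.val + 1 := by
      simp [Fin.succAbove, Fin.lt_def]
    simp only [Matrix.submatrix_apply, Mcyc_apply', h1, Fin.val_succ]
    rw [mod_helper (i.val + 1) (k+2) (by omega)]
    have hi := i.isLt
    have hj := j.isLt
    split_ifs <;> first | ring1 | omega | exact (‹False›).elim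
  rw [Matrix.det_of_upperTriangular]
  · have : ∀ i : Fin (k+1),
        ((Mcyc (k+2)).submatrix (Fin.succAbove 0) Fin.succ) i i = X := by
      intro i
      rw [key, if_pos rfl, if_neg (by omega)]
      ring
    simp only [this, Finset.prod_const, Finset.card_univ, Fintype.card_fin]
  · intro i j hij
    simp only [id_eq, Fin.lt_def] at hij
    rw [key, if_neg (by omega), if_neg (by omega)]
    ring

lemma minor_last (k : ℕ) :
    ((Mcyc (k+2)).submatrix (Fin.succAbove (Fin.last (k+1))) Fin.succ).det
      = (-1 : ℝ[X]) ^ (k+1) := by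
  have key : ∀ i j : Fin (k+1),
      ((Mcyc (k+2)).submatrix (Fin.succAbove (Fin.last (k+1))) Fin.succ) i j
        = (if i.val = j.val + 1 then X else 0) - (if j.val = i.val then 1 else 0) := by
    intro i j
    have h1 : ((Fin.succAbove (Fin.last (k+1)) i : Fin (k+2)) : ℕ) = i.val := by
      simp only [Fin.succAbove]
      rw [if_pos (by simp only [Fin.lt_def, Fin.coe_castSucc, Fin.val_last]; omega)]
      rfl
    simp only [Matrix.submatrix_apply, Mcyc_apply', h1, Fin.val_succ]
    rw [mod_helper i.val (k+2) (by omega)]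
    have hi := i.isLt
    have hj := j.isLt
    split_ifs <;> first | ring1 | omega | exact (‹False›).elim
  rw [Matrix.det_of_lowerTriangular]
  · have : ∀ i : Fin (k+1),
        ((Mcyc (k+2)).submatrix (Fin.succAbove (Fin.last (k+1))) Fin.succ) i i
          = -1 := by
      intro i
      rw [key, if_neg (by omega), if_pos rfl]
      ring
    simp only [this, Finset.prod_const, Finset.card_univ, Fintype.card_fin]
  · intro i j hij
    simp only [OrderDual.toDual_lt_toDual, Fin.lt_def] at hij
    rw [key, if_neg (by omega), if_neg (by omega)]
    ring

lemma det_Mcyc (k : ℕ) : (Mcyc (k+2)).det = X ^ (k+2) - 1 := by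
  have hc0 : ((0 : Fin (k+2)) : ℕ) = 0 := rfl
  rw [Matrix.det_succ_column_zero]
  have hzero : ∀ i : Fin (k+2), i ∉ ({0, Fin.last (k+1)} : Finset (Fin (k+2))) →
      (-1 : ℝ[X]) ^ (i : ℕ) * (Mcyc (k+2)) i 0
        * ((Mcyc (k+2)).submatrix i.succAbove Fin.succ).det = 0 := by
    intro i hi
    simp only [Finset.mem_insert, Finset.mem_singleton] at hi
    push_neg at hi
    obtain ⟨h0, hl⟩ := hi
    have h0' : i.val ≠ 0 := fun h => h0 (Fin.ext (by rw [h, hc0]))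
    have hl' : i.val ≠ k + 1 := fun h => hl (Fin.ext (by rw [h, Fin.val_last]))
    have hz : (Mcyc (k+2)) i 0 = 0 := by
      rw [Mcyc_apply', mod_helper i.val (k+2) i.isLt, hc0]
      have := i.isLt
      split_ifs <;> first | ring1 | omega | exact (‹False›).elim
    rw [hz]
    ring
  rw [← Finset.sum_subset (Finset.subset_univ ({0, Fin.last (k+1)} : Finset (Fin (k+2))))
      (fun i _ hi => hzero i hi),
    Finset.sum_pair (by
      intro h
      have := congrArg Fin.val h
      rw [hc0, Fin.val_last] at this
      omega)]
  have e0 : (Mcyc (k+2)) 0 0 = X := by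
    rw [Mcyc_apply', hc0, Nat.mod_eq_of_lt (by omega)]
    split_ifs <;> first | ring1 | omega | exact (‹False›).elim
  have el : (Mcyc (k+2)) (Fin.last (k+1)) 0 = -1 := by
    rw [Mcyc_apply', hc0, Fin.val_last, show k+1+1 = k+2 from rfl, Nat.mod_self]
    split_ifs <;> first | ring1 | omega | exact (‹False›).elim
  rw [e0, el, minor0, minor_last, hc0, Fin.val_last]
  have : (-1 : ℝ[X]) ^ (k+1) * -1 * (-1) ^ (k+1) = -1 := by
    rw [mul_comm, ← mul_assoc, ← pow_add, Even.neg_one_pow ⟨k+1, by ring⟩]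
    ring
  rw [pow_zero, one_mul, this]
  ring

lemma det_Mcyc' (n : ℕ) (hn : 2 ≤ n) : (Mcyc n).det = X ^ n - 1 := by
  obtain ⟨k, rfl⟩ : ∃ k, n = k + 2 := ⟨n - 2, by omega⟩
  exact det_Mcyc k

-- values of (b + n - a) % n
lemma mod_sub_eq (n a b : ℕ) (ha : a < n) (hb : b < n) :
    (b + n - a) % n = if a ≤ b then b - a else n - (a - b) := by
  split_ifs with h
  · rw [show b + n - a = n + (b - a) by omega, Nat.add_mod_left, Nat.mod_eq_of_lt (by omega)]
  · rw [Nat.mod_eq_of_lt (by omega)]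
    omega

noncomputable def Smat (n : ℕ) : Matrix (Fin n) (Fin n) ℝ[X] :=
  Matrix.of fun i j => X ^ (n - 1 - ((j.val + n - i.val) % n))

lemma Smat_apply (n : ℕ) (i j : Fin n) :
    Smat n i j = X ^ (n - 1 - ((j.val + n - i.val) % n)) := rfl

lemma scalar_key (n a b : ℕ) (ha : a < n) (hb : b < n) :
    X * X ^ (n - 1 - ((b + n - a) % n)) - X ^ (n - 1 - ((b + n - (a+1) % n) % n))
      = if a = b then X ^ n - 1 else (0 : ℝ[X]) := by
  rw [mod_helper a n ha]
  by_cases hab : a = b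
  · subst hab
    rw [if_pos rfl, mod_sub_eq n a a ha ha, if_pos le_rfl, Nat.sub_self, Nat.sub_zero]
    have h2 : (a + n - if a + 1 = n then 0 else a + 1) % n = n - 1 := by
      split_ifs with h
      · rw [show a + n - 0 = n + a by omega, Nat.add_mod_left, Nat.mod_eq_of_lt ha]
        omega
      · rw [Nat.mod_eq_of_lt (by omega)]
        omega
    rw [h2, Nat.sub_self, pow_zero, ← pow_succ']
    congr 2
    omega
  · rw [if_neg hab, mod_sub_eq n a b ha hb]
    have h2 : (b + n - if a + 1 = n then 0 else a + 1) % n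
        = (if a ≤ b then b - a else n - (a - b)) - 1 := by
      split_ifs with h h1 h1
      · -- a+1 = n, a ≤ b: then b = n-1 > a contradiction? a ≤ b, a = n-1, b < n → b = n-1 = a, contra hab
        omega
      · rw [show b + n - 0 = b + n by omega, Nat.add_mod_right, Nat.mod_eq_of_lt hb]
        omega
      · rw [show b + n - (a+1) = n + (b - (a+1)) by omega, Nat.add_mod_left,
          Nat.mod_eq_of_lt (by omega)]
        omega
      · rw [Nat.mod_eq_of_lt (by omega)]
        omega
    rw [h2]
    set m := if a ≤ b then b - a else n - (a - b) with hm
    have hm1 : 1 ≤ m := by rw [hm]; split_ifs <;> omega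
    have hm2 : m ≤ n - 1 := by rw [hm]; split_ifs <;> omega
    have : (X : ℝ[X]) * X ^ (n - 1 - m) = X ^ (n - 1 - (m - 1)) := by
      rw [← pow_succ']
      congr 1
      omega
    rw [this, sub_self]

lemma Mcyc_mul_Smat (n : ℕ) (hn : 0 < n) :
    Mcyc n * Smat n = ((X ^ n - 1 : ℝ[X]) • 1 : Matrix (Fin n) (Fin n) ℝ[X]) := by
  refine Matrix.ext fun i j => ?_
  rw [Matrix.mul_apply]
  set i' : Fin n := (⟨(i.val + 1) % n, Nat.mod_lt _ hn⟩ : Fin n) with hi'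
  have expand : ∀ k : Fin n, Mcyc n i k * Smat n k j
      = (if i = k then X * Smat n k j else 0) - (if k = i' then Smat n k j else 0) := by
    intro k
    have hiff : (k.val = (i.val + 1) % n) ↔ (k = i') := by
      rw [hi', Fin.ext_iff]
    rw [Mcyc_apply, sub_mul, ite_mul, ite_mul, zero_mul, one_mul]
    congr 1
    exact if_congr hiff rfl rfl
  simp only [expand]
  rw [Finset.sum_sub_distrib, Finset.sum_ite_eq, Finset.sum_ite_eq',
    if_pos (Finset.mem_univ _), if_pos (Finset.mem_univ _)]
  have hval : (i' : ℕ) = (i.val + 1) % n := rfl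
  rw [Smat_apply, Smat_apply, hval, Matrix.smul_apply, Matrix.one_apply]
  rw [scalar_key n i.val j.val i.isLt j.isLt]
  by_cases h : i = j
  · rw [if_pos h, if_pos (congrArg Fin.val h)]
    simp
  · rw [if_neg h, if_neg (fun hv => h (Fin.ext hv))]
    simp

noncomputable def Umat (r s : ℕ) : Matrix (Fin (r+s-1)) (Fin 2) ℝ[X] :=
  Matrix.of fun i k => if (k = 0 ∧ i.val = r - 1) ∨ (k = 1 ∧ i.val = 0) then 1 else 0

noncomputable def Wmat (r s : ℕ) : Matrix (Fin 2) (Fin (r+s-1)) ℝ[X] :=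
  Matrix.of fun k j => if (k = 0 ∧ j.val = 0) ∨ (k = 1 ∧ j.val = r) then 1 else 0

lemma Umat_apply0 (r s : ℕ) (i : Fin (r+s-1)) :
    Umat r s i 0 = if i.val = r - 1 then 1 else 0 := by simp [Umat]

lemma Umat_apply1 (r s : ℕ) (i : Fin (r+s-1)) :
    Umat r s i 1 = if i.val = 0 then 1 else 0 := by simp [Umat]

lemma Wmat_apply0 (r s : ℕ) (j : Fin (r+s-1)) :
    Wmat r s 0 j = if j.val = 0 then 1 else 0 := by simp [Wmat]

lemma Wmat_apply1 (r s : ℕ) (j : Fin (r+s-1)) :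
    Wmat r s 1 j = if j.val = r then 1 else 0 := by simp [Wmat]

lemma arc_iff (r s : ℕ) (hr : 2 ≤ r) (hs : 2 ≤ s) (i j : Fin (r+s-1)) :
    inftyHatAdj r s i j ↔
      (j.val = (i.val + 1) % (r+s-1) ∨ (i.val = r - 1 ∧ j.val = 0) ∨
        (i.val = 0 ∧ j.val = r)) := by
  have hi := i.isLt
  have hj := j.isLt
  rw [mod_helper i.val (r+s-1) hi]
  unfold inftyHatAdj inftyAdj
  split_ifs with h <;> omega

lemma decomp (r s : ℕ) (hr : 2 ≤ r) (hs : 2 ≤ s) :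
    charmatrix (adjMat (inftyHatAdj r s)) = Mcyc (r+s-1) - Umat r s * Wmat r s := by
  classical
  refine Matrix.ext fun i j => ?_
  have hi := i.isLt
  have hj := j.isLt
  rw [Matrix.sub_apply, Matrix.mul_apply, Fin.sum_univ_two, Umat_apply0, Umat_apply1,
    Wmat_apply0, Wmat_apply1, Mcyc_apply', charmatrix_apply, Matrix.diagonal_apply]
  have hadj : adjMat (inftyHatAdj r s) i j = if inftyHatAdj r s i j then 1 else 0 := by
    simp [adjMat]
  rw [hadj, apply_ite (fun p : ℝ => (C p : ℝ[X])) _ 1 0, _root_.map_one, _root_.map_zero]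
  have hdiag : (if i = j then (X:ℝ[X]) else 0) = if i.val = j.val then X else 0 := by
    by_cases h : i = j
    · rw [if_pos h, if_pos (congrArg Fin.val h)]
    · rw [if_neg h, if_neg (fun hv => h (Fin.ext hv))]
  rw [hdiag]
  simp only [arc_iff r s hr hs]
  rw [mod_helper i.val (r+s-1) i.isLt]
  split_ifs <;> first | ring1 | omega | exact (‹False›).elim

section
variable (r s : ℕ) (hr : 2 ≤ r) (hs : 2 ≤ s)
include hr hs

omit hr hs in
lemma rowsum (f : Fin (r+s-1) → ℝ[X]) (c : ℕ) (hc : c < r+s-1) :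
    (∑ k, (if (k : Fin (r+s-1)).val = c then 1 else 0) * f k) = f ⟨c, hc⟩ := by
  rw [Finset.sum_eq_single (⟨c, hc⟩ : Fin (r+s-1))]
  · rw [if_pos rfl, one_mul]
  · intro b _ hb
    rw [if_neg (fun h => hb (Fin.ext h)), zero_mul]
  · intro h; exact absurd (Finset.mem_univ _) h

omit hr hs in
lemma colsum (f : Fin (r+s-1) → ℝ[X]) (c : ℕ) (hc : c < r+s-1) :
    (∑ k, f k * (if (k : Fin (r+s-1)).val = c then 1 else 0)) = f ⟨c, hc⟩ := by
  rw [Finset.sum_eq_single (⟨c, hc⟩ : Fin (r+s-1))]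
  · rw [if_pos rfl, mul_one]
  · intro b _ hb
    rw [if_neg (fun h => hb (Fin.ext h)), mul_zero]
  · intro h; exact absurd (Finset.mem_univ _) h

lemma WS_apply0 (j : Fin (r+s-1)) :
    (Wmat r s * Smat (r+s-1)) 0 j = Smat (r+s-1) ⟨0, by omega⟩ j := by
  rw [Matrix.mul_apply]
  rw [show (fun k => Wmat r s 0 k * Smat (r+s-1) k j)
      = fun k => (if (k : Fin (r+s-1)).val = 0 then 1 else 0) * Smat (r+s-1) k j from
    funext fun k => by rw [Wmat_apply0]]
  exact rowsum r s _ 0 (by omega)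

lemma WS_apply1 (j : Fin (r+s-1)) :
    (Wmat r s * Smat (r+s-1)) 1 j = Smat (r+s-1) ⟨r, by omega⟩ j := by
  rw [Matrix.mul_apply]
  rw [show (fun k => Wmat r s 1 k * Smat (r+s-1) k j)
      = fun k => (if (k : Fin (r+s-1)).val = r then 1 else 0) * Smat (r+s-1) k j from
    funext fun k => by rw [Wmat_apply1]]
  exact rowsum r s _ r (by omega)

lemma Q00 : (Wmat r s * Smat (r+s-1) * Umat r s) 0 0 = X ^ (s-1) := by
  rw [Matrix.mul_apply]
  rw [show (fun k => (Wmat r s * Smat (r+s-1)) 0 k * Umat r s k 0)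
      = fun k => (Wmat r s * Smat (r+s-1)) 0 k * (if (k : Fin (r+s-1)).val = r-1 then 1 else 0)
      from funext fun k => by rw [Umat_apply0]]
  rw [colsum r s (fun k => (Wmat r s * Smat (r+s-1)) 0 k) (r-1) (by omega), WS_apply0 r s hr hs, Smat_apply]
  rw [show ((⟨r-1, by omega⟩ : Fin (r+s-1)) : ℕ) + (r+s-1) - ((⟨0, by omega⟩ : Fin (r+s-1)) : ℕ)
      = (r-1) + (r+s-1) from by show (r-1) + (r+s-1) - 0 = (r-1) + (r+s-1); omega]
  rw [Nat.add_mod_right, Nat.mod_eq_of_lt (by omega)]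
  congr 1
  omega

lemma Q01 : (Wmat r s * Smat (r+s-1) * Umat r s) 0 1 = X ^ (r+s-2) := by
  rw [Matrix.mul_apply]
  rw [show (fun k => (Wmat r s * Smat (r+s-1)) 0 k * Umat r s k 1)
      = fun k => (Wmat r s * Smat (r+s-1)) 0 k * (if (k : Fin (r+s-1)).val = 0 then 1 else 0)
      from funext fun k => by rw [Umat_apply1]]
  rw [colsum r s (fun k => (Wmat r s * Smat (r+s-1)) 0 k) 0 (by omega), WS_apply0 r s hr hs, Smat_apply]
  rw [show ((⟨0, by omega⟩ : Fin (r+s-1)) : ℕ) + (r+s-1) - ((⟨0, by omega⟩ : Fin (r+s-1)) : ℕ)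
      = (r+s-1) from by show 0 + (r+s-1) - 0 = r+s-1; omega]
  rw [Nat.mod_self, show r+s-1-1-0 = r+s-2 from by omega]

lemma Q10 : (Wmat r s * Smat (r+s-1) * Umat r s) 1 0 = 1 := by
  rw [Matrix.mul_apply]
  rw [show (fun k => (Wmat r s * Smat (r+s-1)) 1 k * Umat r s k 0)
      = fun k => (Wmat r s * Smat (r+s-1)) 1 k * (if (k : Fin (r+s-1)).val = r-1 then 1 else 0)
      from funext fun k => by rw [Umat_apply0]]
  rw [colsum r s (fun k => (Wmat r s * Smat (r+s-1)) 1 k) (r-1) (by omega), WS_apply1 r s hr hs, Smat_apply]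
  rw [show ((⟨r-1, by omega⟩ : Fin (r+s-1)) : ℕ) + (r+s-1) - ((⟨r, by omega⟩ : Fin (r+s-1)) : ℕ)
      = (r+s-2) from by show r-1 + (r+s-1) - r = r+s-2; omega]
  rw [Nat.mod_eq_of_lt (by omega), show r+s-1-1-(r+s-2) = 0 from by omega, pow_zero]

lemma Q11 : (Wmat r s * Smat (r+s-1) * Umat r s) 1 1 = X ^ (r-1) := by
  rw [Matrix.mul_apply]
  rw [show (fun k => (Wmat r s * Smat (r+s-1)) 1 k * Umat r s k 1)
      = fun k => (Wmat r s * Smat (r+s-1)) 1 k * (if (k : Fin (r+s-1)).val = 0 then 1 else 0)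
      from funext fun k => by rw [Umat_apply1]]
  rw [colsum r s (fun k => (Wmat r s * Smat (r+s-1)) 1 k) 0 (by omega), WS_apply1 r s hr hs, Smat_apply]
  rw [show ((⟨0, by omega⟩ : Fin (r+s-1)) : ℕ) + (r+s-1) - ((⟨r, by omega⟩ : Fin (r+s-1)) : ℕ)
      = (s-1) from by show 0 + (r+s-1) - r = s-1; omega]
  rw [Nat.mod_eq_of_lt (by omega)]
  congr 1
  omega

end

lemma field_id {K : Type*} [Field K] (A B N : K) (h : N - 1 ≠ 0) :
    (N - 1) * ((1 - (N - 1)⁻¹ * A) * (1 - (N - 1)⁻¹ * B)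
      - -((N - 1)⁻¹ * (A * B)) * -((N - 1)⁻¹ * 1)) = N - A - B - 1 := by
  field_simp
  ring

theorem stmt16 (r s : ℕ) (hr : 2 ≤ r) (hs : 2 ≤ s) :
    (adjMat (inftyHatAdj r s)).charpoly =
      X ^ (r + s - 1) - X ^ (r + s - 1 - r) - X ^ (r + s - 1 - s) - 1 := by
  have hn : 2 ≤ r + s - 1 := by omega
  have hn0 : 0 < r + s - 1 := by omega
  rw [show r + s - 1 - r = s - 1 from by omega, show r + s - 1 - s = r - 1 from by omega]
  show (charmatrix (adjMat (inftyHatAdj r s))).det = _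
  apply IsFractionRing.injective ℝ[X] (FractionRing ℝ[X])
  set φ : ℝ[X] →+* FractionRing ℝ[X] := (algebraMap ℝ[X] (FractionRing ℝ[X])) with hφ
  set F := FractionRing ℝ[X]
  rw [RingHom.map_det, RingHom.mapMatrix_apply, decomp r s hr hs,
    Matrix.map_sub (φ : ℝ[X] → F) (fun a b => map_sub φ a b), Matrix.map_mul]
  set M' := (Mcyc (r+s-1)).map φ with hM'
  set S' := (Smat (r+s-1)).map φ with hS'
  set U' := (Umat r s).map φ with hU'
  set W' := (Wmat r s).map φ with hW'
  set d : F := φ (X ^ (r+s-1) - 1) with hd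
  have hdne : d ≠ 0 := by
    rw [hd]
    intro h
    have h0 : (X ^ (r+s-1) - 1 : ℝ[X]) = 0 :=
      IsFractionRing.injective ℝ[X] F (by rw [h, map_zero])
    have := Polynomial.X_pow_sub_C_ne_zero hn0 (1 : ℝ)
    rw [_root_.map_one] at this
    exact this h0
  have hMS : M' * S' = d • 1 := by
    have h1 := congrArg (fun A => Matrix.map A φ) (Mcyc_mul_Smat (r+s-1) hn0)
    rw [Matrix.map_mul] at h1
    rw [← hM', ← hS'] at h1
    rw [h1]
    refine Matrix.ext fun i j => ?_
    simp [Matrix.map_apply, Matrix.smul_apply, Matrix.one_apply, apply_ite φ, smul_eq_mul, hd,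
      map_sub, map_pow, _root_.map_one]
  have hdetM : M'.det = d := by
    rw [hM', ← RingHom.mapMatrix_apply, ← RingHom.map_det, det_Mcyc' _ hn, hd]
  have factor : M' - U' * W' = M' * (1 - d⁻¹ • (S' * (U' * W'))) := by
    rw [Matrix.mul_sub, Matrix.mul_one]
    congr 1
    rw [Matrix.mul_smul, ← Matrix.mul_assoc, hMS, Matrix.smul_mul, Matrix.one_mul, smul_smul,
      inv_mul_cancel₀ hdne, one_smul]
  rw [factor, Matrix.det_mul, hdetM]
  have step2 : (1 - d⁻¹ • (S' * (U' * W'))) = 1 - (d⁻¹ • (S' * U')) * W' := by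
    rw [Matrix.smul_mul, Matrix.mul_assoc]
  rw [step2, Matrix.det_one_sub_mul_comm]
  have step3 : (1 : Matrix (Fin 2) (Fin 2) F) - W' * (d⁻¹ • (S' * U'))
      = 1 - d⁻¹ • (W' * S' * U') := by
    rw [Matrix.mul_smul, Matrix.mul_assoc]
  rw [step3]
  have hQmap : W' * S' * U' = (Wmat r s * Smat (r+s-1) * Umat r s).map φ := by
    rw [Matrix.map_mul, Matrix.map_mul]
  rw [hQmap, Matrix.det_fin_two]
  have e00 : ((1 : Matrix (Fin 2) (Fin 2) F)
      - d⁻¹ • (Wmat r s * Smat (r+s-1) * Umat r s).map φ) 0 0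
      = 1 - d⁻¹ * φ (X ^ (s-1)) := by
    rw [Matrix.sub_apply, Matrix.smul_apply, Matrix.map_apply, Q00 r s hr hs,
      Matrix.one_apply_eq, smul_eq_mul]
  have e01 : ((1 : Matrix (Fin 2) (Fin 2) F)
      - d⁻¹ • (Wmat r s * Smat (r+s-1) * Umat r s).map φ) 0 1
      = - (d⁻¹ * φ (X ^ (r+s-2))) := by
    rw [Matrix.sub_apply, Matrix.smul_apply, Matrix.map_apply, Q01 r s hr hs,
      Matrix.one_apply_ne (by decide), smul_eq_mul]
    ring
  have e10 : ((1 : Matrix (Fin 2) (Fin 2) F)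
      - d⁻¹ • (Wmat r s * Smat (r+s-1) * Umat r s).map φ) 1 0
      = - (d⁻¹ * 1) := by
    rw [Matrix.sub_apply, Matrix.smul_apply, Matrix.map_apply, Q10 r s hr hs,
      Matrix.one_apply_ne (by decide), smul_eq_mul, _root_.map_one]
    ring
  have e11 : ((1 : Matrix (Fin 2) (Fin 2) F)
      - d⁻¹ • (Wmat r s * Smat (r+s-1) * Umat r s).map φ) 1 1
      = 1 - d⁻¹ * φ (X ^ (r-1)) := by
    rw [Matrix.sub_apply, Matrix.smul_apply, Matrix.map_apply, Q11 r s hr hs,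
      Matrix.one_apply_eq, smul_eq_mul]
  rw [e00, e01, e10, e11]
  have hAB : φ (X ^ (s-1)) * φ (X ^ (r-1)) = φ (X ^ (r+s-2)) := by
    rw [← _root_.map_mul, ← pow_add, show s - 1 + (r - 1) = r + s - 2 from by omega]
  have hd2 : d = φ (X ^ (r+s-1)) - 1 := by rw [hd, map_sub, _root_.map_one]
  rw [← hAB, hd2, map_sub, map_sub, map_sub, _root_.map_one]
  exact field_id (φ (X ^ (s-1))) (φ (X ^ (r-1))) (φ (X ^ (r+s-1))) (by rw [← hd2]; exact hdne)
end

section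
/- For all integers r, s with 2 ≤ r < s, the digraphs ∞̂(r,s) and ∞̂(s,r) have the same complementarity spectrum, Π(∞̂(r,s)) = Π(∞̂(s,r)), yet they are not isomorphic: there is no bijection e between their vertex sets such that (u,w) is an arc of ∞̂(r,s) if and only if (e u, e w) is an arc of ∞̂(s,r). -/
open Matrix Polynomial

namespace Stmt17Aux

noncomputable def padX (a b : ℕ) (x : Fin (a + b - 1) → ℝ) : ℕ → ℝ :=
  fun k => if h : k < a + b - 1 then x ⟨k, h⟩ else 0

lemma padX_eq (a b : ℕ) (x : Fin (a + b - 1) → ℝ) (k : ℕ) (h : k < a + b - 1) :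
    padX a b x k = x ⟨k, h⟩ := dif_pos h

lemma padX_fin (a b : ℕ) (x : Fin (a + b - 1) → ℝ) (i : Fin (a + b - 1)) :
    padX a b x i.val = x i := by rw [padX_eq a b x i.val i.isLt]

lemma sum_ind_single {n : ℕ} (x : Fin n → ℝ) (p : Fin n → Prop) [DecidablePred p] (j0 : Fin n)
    (h : ∀ j, p j ↔ j = j0) :
    (∑ j, (if p j then (1:ℝ) else 0) * x j) = x j0 := by
  have h1 : ∀ j : Fin n, (if p j then (1:ℝ) else 0) * x j = if j = j0 then x j else 0 := by
    intro j
    by_cases hj : p j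
    · rw [if_pos hj, if_pos ((h j).mp hj), one_mul]
    · rw [if_neg hj, if_neg (fun e => hj ((h j).mpr e)), zero_mul]
  rw [Finset.sum_congr rfl fun j _ => h1 j, Finset.sum_ite_eq' Finset.univ j0]
  simp

lemma sum_ind_pair {n : ℕ} (x : Fin n → ℝ) (p : Fin n → Prop) [DecidablePred p]
    (j0 j1 : Fin n) (hne : j0 ≠ j1) (h : ∀ j, p j ↔ j = j0 ∨ j = j1) :
    (∑ j, (if p j then (1:ℝ) else 0) * x j) = x j0 + x j1 := by
  have h1 : ∀ j : Fin n, (if p j then (1:ℝ) else 0) * x j =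
      (if j = j0 then x j else 0) + (if j = j1 then x j else 0) := by
    intro j
    by_cases e0 : j = j0 <;> by_cases e1 : j = j1
    · exact absurd (e0.symm.trans e1) hne
    · simp [h, e0, e1, hne]
    · simp [h, e0, e1, Ne.symm hne]
    · simp [h, e0, e1]
  rw [Finset.sum_congr rfl fun j _ => h1 j, Finset.sum_add_distrib,
    Finset.sum_ite_eq' Finset.univ j0, Finset.sum_ite_eq' Finset.univ j1]
  simp

lemma mulVec_formula {a b : ℕ} (ha : 2 ≤ a) (hb : 2 ≤ b) (x : Fin (a + b - 1) → ℝ)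
    (i : Fin (a + b - 1)) :
    (adjMat (inftyHatAdj a b)).mulVec x i =
      if i.val = 0 then padX a b x 1 + padX a b x a
      else if i.val = a - 1 then padX a b x 0 + padX a b x a
      else if i.val = a + b - 2 then padX a b x 0
      else padX a b x (i.val + 1) := by
  classical
  have hmv : (adjMat (inftyHatAdj a b)).mulVec x i
      = ∑ j, (if inftyHatAdj a b i j then (1:ℝ) else 0) * x j := by
    simp only [Matrix.mulVec, dotProduct, adjMat, Matrix.of_apply]
  rw [hmv]
  have hin := i.isLt
  by_cases h0 : i.val = 0
  · rw [if_pos h0, padX_eq a b x 1 (by omega), padX_eq a b x a (by omega)]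
    refine sum_ind_pair x _ ⟨1, by omega⟩ ⟨a, by omega⟩ (by simp only [ne_eq, Fin.mk.injEq]; omega) ?_
    intro j
    have hj := j.isLt
    simp only [inftyHatAdj, inftyAdj, Fin.ext_iff]
    omega
  · rw [if_neg h0]
    by_cases h1 : i.val = a - 1
    · rw [if_pos h1, padX_eq a b x 0 (by omega), padX_eq a b x a (by omega)]
      refine sum_ind_pair x _ ⟨0, by omega⟩ ⟨a, by omega⟩ (by simp only [ne_eq, Fin.mk.injEq]; omega) ?_
      intro j
      have hj := j.isLt
      simp only [inftyHatAdj, inftyAdj, Fin.ext_iff]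
      omega
    · rw [if_neg h1]
      by_cases h2 : i.val = a + b - 2
      · rw [if_pos h2, padX_eq a b x 0 (by omega)]
        refine sum_ind_single x _ ⟨0, by omega⟩ ?_
        intro j
        have hj := j.isLt
        simp only [inftyHatAdj, inftyAdj, Fin.ext_iff]
        omega
      · rw [if_neg h2, padX_eq a b x (i.val + 1) (by omega)]
        refine sum_ind_single x _ ⟨i.val + 1, by omega⟩ ?_
        intro j
        have hj := j.isLt
        simp only [inftyHatAdj, inftyAdj, Fin.ext_iff]
        omega


lemma lam_char {a b : ℕ} (ha : 2 ≤ a) (hb : 2 ≤ b) (lam : ℝ)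
    (h : isComplEig (adjMat (inftyHatAdj a b)) lam) :
    lam = 0 ∨ lam = 1 ∨ (1 < lam ∧ lam ^ (a + b - 1) = lam ^ (a - 1) + lam ^ (b - 1) + 1) := by
  obtain ⟨x, hx0, hxnn, hge, hsum⟩ := h
  have hxnn' : ∀ i, 0 ≤ x i := fun i => hxnn i
  have hge' : ∀ i, 0 ≤ (adjMat (inftyHatAdj a b)).mulVec x i - lam * x i := by
    intro i
    have := hge i
    simpa using this
  have hterm : ∀ i, x i * ((adjMat (inftyHatAdj a b)).mulVec x i - lam * x i) = 0 := by
    have hsum' : ∑ i, x i * ((adjMat (inftyHatAdj a b)).mulVec x i - lam * x i) = 0 := by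
      rw [← hsum]
      exact Finset.sum_congr rfl fun i _ => by simp [smul_eq_mul]
    intro i
    exact (Finset.sum_eq_zero_iff_of_nonneg
      (fun i _ => mul_nonneg (hxnn' i) (hge' i))).mp hsum' i (Finset.mem_univ i)
  have eig : ∀ i, 0 < x i → (adjMat (inftyHatAdj a b)).mulVec x i = lam * x i := by
    intro i hi
    rcases mul_eq_zero.mp (hterm i) with h | h
    · exact absurd h (ne_of_gt hi)
    · exact sub_eq_zero.mp h
  have hXnn : ∀ k, 0 ≤ padX a b x k := by
    intro k
    unfold padX
    split
    · exact hxnn' _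
    · exact le_refl 0
  have Egen : ∀ (k : ℕ), k < a + b - 1 → 0 < padX a b x k →
      lam * padX a b x k =
        if k = 0 then padX a b x 1 + padX a b x a
        else if k = a - 1 then padX a b x 0 + padX a b x a
        else if k = a + b - 2 then padX a b x 0
        else padX a b x (k + 1) := by
    intro k hk hpos
    have h := eig ⟨k, hk⟩ (by rwa [padX_eq a b x k hk] at hpos)
    rw [mulVec_formula ha hb x ⟨k, hk⟩] at h
    rw [padX_eq a b x k hk]
    exact h.symm
  have E0 : 0 < padX a b x 0 → lam * padX a b x 0 = padX a b x 1 + padX a b x a := by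
    intro hp
    have := Egen 0 (by omega) hp
    rwa [if_pos rfl] at this
  have E1 : ∀ k, 1 ≤ k → k ≤ a - 2 → 0 < padX a b x k →
      padX a b x (k + 1) = lam * padX a b x k := by
    intro k h1 h2 hp
    have := Egen k (by omega) hp
    rw [if_neg (by omega), if_neg (by omega), if_neg (by omega)] at this
    exact this.symm
  have E2 : 0 < padX a b x (a - 1) →
      lam * padX a b x (a - 1) = padX a b x 0 + padX a b x a := by
    intro hp
    have := Egen (a - 1) (by omega) hp
    rwa [if_neg (by omega), if_pos rfl] at this
  have E3 : ∀ k, a ≤ k → k ≤ a + b - 3 → 0 < padX a b x k →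
      padX a b x (k + 1) = lam * padX a b x k := by
    intro k h1 h2 hp
    have := Egen k (by omega) hp
    rw [if_neg (by omega), if_neg (by omega), if_neg (by omega)] at this
    exact this.symm
  have E4 : 0 < padX a b x (a + b - 2) →
      lam * padX a b x (a + b - 2) = padX a b x 0 := by
    intro hp
    have := Egen (a + b - 2) (by omega) hp
    rwa [if_neg (by omega), if_neg (by omega), if_pos rfl] at this
  -- a positive entry exists
  obtain ⟨v, hv⟩ := Function.ne_iff.mp hx0
  have hxv : 0 < x v := lt_of_le_of_ne (hxnn' v) (by simpa [eq_comm] using hv)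
  -- lam is nonnegative
  have hAxnn : 0 ≤ (adjMat (inftyHatAdj a b)).mulVec x v := by
    rw [mulVec_formula ha hb]
    split_ifs
    · exact add_nonneg (hXnn 1) (hXnn a)
    · exact add_nonneg (hXnn 0) (hXnn a)
    · exact hXnn 0
    · exact hXnn _
  have hlamnn : 0 ≤ lam := by
    have h1 := eig v hxv
    rw [h1] at hAxnn
    by_contra hc
    push_neg at hc
    nlinarith
  rcases eq_or_lt_of_le hlamnn with heq | hlampos
  · exact Or.inl heq.symm
  right
  -- qualitative positivity propagation
  have posDown : ∀ j k, a ≤ k → k + j = a + b - 2 → 0 < padX a b x k → 0 < padX a b x 0 := by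
    intro j
    induction j with
    | zero =>
      intro k h1 h2 hp
      have hk : k = a + b - 2 := by omega
      subst hk
      have hE := E4 hp
      rw [← hE]
      exact mul_pos hlampos hp
    | succ j ih =>
      intro k h1 h2 hp
      have hE := E3 k h1 (by omega) hp
      exact ih (k + 1) (by omega) (by omega) (by rw [hE]; exact mul_pos hlampos hp)
  have posUp : ∀ j k, 1 ≤ k → k + j = a - 1 → 0 < padX a b x k → 0 < padX a b x (a - 1) := by
    intro j
    induction j with
    | zero =>
      intro k h1 h2 hp
      have hk : k = a - 1 := by omega
      rwa [hk] at hp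
    | succ j ih =>
      intro k h1 h2 hp
      have hE := E1 k h1 (by omega) hp
      exact ih (k + 1) (by omega) (by omega) (by rw [hE]; exact mul_pos hlampos hp)
  have hX0 : 0 < padX a b x 0 := by
    have hvlt := v.isLt
    have hXv : 0 < padX a b x v.val := by rwa [padX_fin]
    rcases Nat.lt_or_ge v.val 1 with hc | hc
    · have : v.val = 0 := by omega
      rwa [this] at hXv
    rcases Nat.lt_or_ge v.val a with hc2 | hc2
    · have hXa1 : 0 < padX a b x (a - 1) := posUp (a - 1 - v.val) v.val hc (by omega) hXv
      have hE := E2 hXa1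
      by_cases hXa : 0 < padX a b x a
      · exact posDown (b - 2) a le_rfl (by omega) hXa
      · have hz : padX a b x a = 0 := le_antisymm (not_lt.mp hXa) (hXnn a)
        have : 0 < padX a b x 0 + padX a b x a := by
          rw [← hE]; exact mul_pos hlampos hXa1
        rw [hz, add_zero] at this
        exact this
    · exact posDown (a + b - 2 - v.val) v.val hc2 (by omega) hXv
  have hE0 := E0 hX0
  -- quantitative chains
  have chainR : 0 < padX a b x 1 → ∀ k, k ≤ a - 2 →
      padX a b x (1 + k) = lam ^ k * padX a b x 1 := by
    intro hp1 k
    induction k with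
    | zero => intro _; simp
    | succ k ih =>
      intro hk
      have hik := ih (by omega)
      have hpos : 0 < padX a b x (1 + k) := by
        rw [hik]; exact mul_pos (pow_pos hlampos k) hp1
      have hE := E1 (1 + k) (by omega) (by omega) hpos
      rw [show 1 + (k + 1) = (1 + k) + 1 by omega, hE, hik, pow_succ]
      ring
  have chainS : 0 < padX a b x a → ∀ k, k ≤ b - 2 →
      padX a b x (a + k) = lam ^ k * padX a b x a := by
    intro hpa k
    induction k with
    | zero => intro _; simp
    | succ k ih =>
      intro hk
      have hik := ih (by omega)
      have hpos : 0 < padX a b x (a + k) := by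
        rw [hik]; exact mul_pos (pow_pos hlampos k) hpa
      have hE := E3 (a + k) (by omega) (by omega) hpos
      rw [show a + (k + 1) = (a + k) + 1 by omega, hE, hik, pow_succ]
      ring
  have hR : 0 < padX a b x 1 → lam ^ (a - 1) * padX a b x 1 = padX a b x 0 + padX a b x a := by
    intro hp1
    have h1 := chainR hp1 (a - 2) le_rfl
    rw [show 1 + (a - 2) = a - 1 by omega] at h1
    have hpos : 0 < padX a b x (a - 1) := by
      rw [h1]; exact mul_pos (pow_pos hlampos _) hp1
    have hE := E2 hpos
    calc lam ^ (a - 1) * padX a b x 1 = lam * (lam ^ (a - 2) * padX a b x 1) := by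
          rw [show a - 1 = (a - 2) + 1 by omega, pow_succ]; ring
      _ = lam * padX a b x (a - 1) := by rw [h1]
      _ = padX a b x 0 + padX a b x a := hE
  have hS : 0 < padX a b x a → lam ^ (b - 1) * padX a b x a = padX a b x 0 := by
    intro hpa
    have h1 := chainS hpa (b - 2) le_rfl
    rw [show a + (b - 2) = a + b - 2 by omega] at h1
    have hpos : 0 < padX a b x (a + b - 2) := by
      rw [h1]; exact mul_pos (pow_pos hlampos _) hpa
    have hE := E4 hpos
    calc lam ^ (b - 1) * padX a b x a = lam * (lam ^ (b - 2) * padX a b x a) := by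
          rw [show b - 1 = (b - 2) + 1 by omega, pow_succ]; ring
      _ = lam * padX a b x (a + b - 2) := by rw [h1]
      _ = padX a b x 0 := hE
  -- helper: positive lam with lam^m = 1 and m > 0 implies lam = 1
  have pow_one_imp : ∀ m : ℕ, 0 < m → lam ^ m = 1 → lam = 1 := by
    intro m hm hpow
    rcases lt_trichotomy lam 1 with hc | hc | hc
    · have : lam ^ m < 1 := pow_lt_one₀ (le_of_lt hlampos) hc (by omega)
      linarith
    · exact hc
    · have : 1 < lam ^ m := one_lt_pow₀ hc (by omega)
      linarith
  by_cases hXa : 0 < padX a b x a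
  · have hSa := hS hXa
    by_cases hX1 : 0 < padX a b x 1
    · -- main case: the characteristic equation
      right
      have hRa := hR hX1
      have hpb : lam * lam ^ (b - 1) = lam ^ b := by
        rw [← pow_succ']
        congr 1
        omega
      have hx1val : padX a b x 1 = (lam ^ b - 1) * padX a b x a := by
        have h2 : lam * (lam ^ (b - 1) * padX a b x a) = padX a b x 1 + padX a b x a := by
          rw [hSa]; exact hE0
        have h3 : lam ^ b * padX a b x a = padX a b x 1 + padX a b x a := by
          rw [← hpb, mul_assoc]; exact h2
        linarith
      have hlam1 : 1 < lam := by
        have h2 : 0 < (lam ^ b - 1) * padX a b x a := by rw [← hx1val]; exact hX1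
        have h3 : 1 < lam ^ b := by nlinarith
        by_contra hle
        push_neg at hle
        have : lam ^ b ≤ 1 := pow_le_one₀ (le_of_lt hlampos) hle
        linarith
      refine ⟨hlam1, ?_⟩
      have hfin : lam ^ (a - 1) * ((lam ^ b - 1) * padX a b x a)
          = lam ^ (b - 1) * padX a b x a + padX a b x a := by
        rw [← hx1val, hRa, ← hSa]
      have key : lam ^ (a - 1) * (lam ^ b - 1) = lam ^ (b - 1) + 1 := by
        have h4 : (lam ^ (a - 1) * (lam ^ b - 1)) * padX a b x a
            = (lam ^ (b - 1) + 1) * padX a b x a := by linear_combination hfin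
        exact mul_right_cancel₀ (ne_of_gt hXa) h4
      have hpab : lam ^ (a - 1) * lam ^ b = lam ^ (a + b - 1) := by
        rw [← pow_add]
        congr 1
        omega
      linear_combination key - hpab
    · -- X 1 = 0 : lam^b = 1
      left
      have hX1z : padX a b x 1 = 0 := le_antisymm (not_lt.mp hX1) (hXnn 1)
      have h2 : lam ^ (b - 1) * (lam * padX a b x 0) = padX a b x 0 := by
        rw [hE0, hX1z, zero_add]
        exact hSa
      have hpb : lam ^ (b - 1) * lam = lam ^ b := by
        rw [← pow_succ]
        congr 1
        omega
      have h3 : lam ^ b * padX a b x 0 = 1 * padX a b x 0 := by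
        rw [one_mul, ← hpb]
        linear_combination h2
      exact pow_one_imp b (by omega) (mul_right_cancel₀ (ne_of_gt hX0) h3)
  · -- X a = 0 : lam^a = 1
    left
    have hXaz : padX a b x a = 0 := le_antisymm (not_lt.mp hXa) (hXnn a)
    have hX1 : 0 < padX a b x 1 := by
      have : padX a b x 1 = lam * padX a b x 0 := by rw [hE0, hXaz, add_zero]
      rw [this]
      exact mul_pos hlampos hX0
    have hRa := hR hX1
    rw [hXaz, add_zero] at hRa
    have h2 : padX a b x 1 = lam * padX a b x 0 := by rw [hE0, hXaz, add_zero]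
    have hpa : lam ^ (a - 1) * lam = lam ^ a := by
      rw [← pow_succ]
      congr 1
      omega
    have h3 : lam ^ a * padX a b x 0 = 1 * padX a b x 0 := by
      rw [one_mul, ← hpa]
      rw [h2] at hRa
      linear_combination hRa
    exact pow_one_imp a (by omega) (mul_right_cancel₀ (ne_of_gt hX0) h3)


lemma adj_mulVec_nonneg {V : Type*} [Fintype V] (adj : V → V → Prop) (x : V → ℝ)
    (hx : ∀ i, 0 ≤ x i) (i : V) : 0 ≤ (adjMat adj).mulVec x i := by
  classical
  simp only [Matrix.mulVec, dotProduct, adjMat, Matrix.of_apply]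
  apply Finset.sum_nonneg
  intro j _
  apply mul_nonneg _ (hx j)
  split <;> norm_num

lemma zero_mem {a b : ℕ} (ha : 2 ≤ a) (hb : 2 ≤ b) :
    isComplEig (adjMat (inftyHatAdj a b)) 0 := by
  classical
  set x : Fin (a + b - 1) → ℝ := fun i => if i.val = 0 then 1 else 0 with hxdef
  have hxval : ∀ i : Fin (a + b - 1), x i = if i.val = 0 then 1 else 0 := fun i => rfl
  have hxnn : ∀ i, 0 ≤ x i := by
    intro i
    rw [hxval]
    split <;> norm_num
  refine ⟨x, ?_, ?_, ?_, ?_⟩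
  · intro h
    have hz := congrFun h ⟨0, by omega⟩
    rw [hxval] at hz
    rw [if_pos rfl] at hz
    simp at hz
  · intro i
    simpa using hxnn i
  · intro i
    simpa using adj_mulVec_nonneg _ x hxnn i
  · apply Finset.sum_eq_zero
    intro i _
    simp only [zero_smul, sub_zero]
    by_cases hi : i.val = 0
    · rw [mulVec_formula ha hb x i, if_pos hi,
        padX_eq a b x 1 (by omega), padX_eq a b x a (by omega)]
      rw [hxval ⟨1, by omega⟩, hxval ⟨a, by omega⟩]
      rw [if_neg (by simp only [Fin.val_mk]; omega), if_neg (by simp only [Fin.val_mk]; omega)]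
      ring
    · rw [hxval, if_neg hi, zero_mul]

lemma one_mem {a b : ℕ} (ha : 2 ≤ a) (hb : 2 ≤ b) :
    isComplEig (adjMat (inftyHatAdj a b)) 1 := by
  classical
  set x : Fin (a + b - 1) → ℝ := fun i => if i.val ≤ a - 1 then 1 else 0 with hxdef
  have hxval : ∀ i : Fin (a + b - 1), x i = if i.val ≤ a - 1 then 1 else 0 := fun i => rfl
  have hpad : ∀ k (h : k < a + b - 1), padX a b x k = if k ≤ a - 1 then 1 else 0 := by
    intro k h
    rw [padX_eq a b x k h, hxval]
  have hxnn : ∀ i, 0 ≤ x i := by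
    intro i
    rw [hxval]
    split <;> norm_num
  have hkey : ∀ i : Fin (a + b - 1),
      0 ≤ (adjMat (inftyHatAdj a b)).mulVec x i - 1 * x i ∧
      x i * ((adjMat (inftyHatAdj a b)).mulVec x i - 1 * x i) = 0 := by
    intro i
    have hlt := i.isLt
    rw [mulVec_formula ha hb x i, hxval]
    by_cases h0 : i.val = 0
    · rw [if_pos h0, hpad 1 (by omega), hpad a (by omega),
        if_pos (by omega), if_neg (by omega), if_pos (by omega)]
      norm_num
    · rw [if_neg h0]
      by_cases h1 : i.val = a - 1
      · rw [if_pos h1, hpad 0 (by omega), hpad a (by omega),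
          if_pos (by omega), if_neg (by omega), if_pos (by omega)]
        norm_num
      · rw [if_neg h1]
        by_cases h2 : i.val = a + b - 2
        · rw [if_pos h2, hpad 0 (by omega), if_pos (by omega), if_neg (by omega)]
          norm_num
        · rw [if_neg h2, hpad (i.val + 1) (by omega)]
          by_cases h3 : i.val ≤ a - 2
          · rw [if_pos (by omega : i.val + 1 ≤ a - 1), if_pos (by omega)]
            norm_num
          · rw [if_neg (by omega : ¬ i.val + 1 ≤ a - 1), if_neg (by omega)]
            norm_num
  refine ⟨x, ?_, ?_, ?_, ?_⟩
  · intro h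
    have hz := congrFun h ⟨0, by omega⟩
    rw [hxval] at hz
    rw [if_pos (by simp only [Fin.val_mk]; omega)] at hz
    simp at hz
  · intro i
    simpa using hxnn i
  · intro i
    simpa using (hkey i).1
  · apply Finset.sum_eq_zero
    intro i _
    simpa using (hkey i).2

lemma root_mem {a b : ℕ} (ha : 2 ≤ a) (hb : 2 ≤ b) (lam : ℝ) (hlam : 1 < lam)
    (heq : lam ^ (a + b - 1) = lam ^ (a - 1) + lam ^ (b - 1) + 1) :
    isComplEig (adjMat (inftyHatAdj a b)) lam := by
  classical
  have hlam0 : (0:ℝ) < lam := by linarith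
  have hlb : (1:ℝ) < lam ^ b := one_lt_pow₀ hlam (by omega)
  set F : ℕ → ℝ := fun k =>
    if k = 0 then lam ^ (b - 1) else if k ≤ a - 1 then lam ^ (k - 1) * (lam ^ b - 1)
    else lam ^ (k - a) with hFdef
  have hFpos : ∀ k, 0 < F k := by
    intro k
    rw [hFdef]
    dsimp only
    split
    · exact pow_pos hlam0 _
    · split
      · exact mul_pos (pow_pos hlam0 _) (by linarith)
      · exact pow_pos hlam0 _
  set x : Fin (a + b - 1) → ℝ := fun i => F i.val with hxdef
  have hxval : ∀ i : Fin (a + b - 1), x i = F i.val := fun i => rfl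
  have hpad : ∀ k (h : k < a + b - 1), padX a b x k = F k := by
    intro k h
    rw [padX_eq a b x k h, hxval]
  have hF0 : F 0 = lam ^ (b - 1) := by
    rw [hFdef]
    dsimp only
    rw [if_pos rfl]
  have hF1 : F 1 = lam ^ b - 1 := by
    rw [hFdef]
    dsimp only
    rw [if_neg (by omega), if_pos (by omega)]
    norm_num
  have hFa : F a = 1 := by
    rw [hFdef]
    dsimp only
    rw [if_neg (by omega), if_neg (by omega)]
    simp
  -- eigen equation
  have hmv : ∀ i : Fin (a + b - 1), (adjMat (inftyHatAdj a b)).mulVec x i = lam * x i := by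
    intro i
    have hlt := i.isLt
    rw [mulVec_formula ha hb x i, hxval]
    by_cases h0 : i.val = 0
    · rw [if_pos h0, hpad 1 (by omega), hpad a (by omega), h0, hF0, hF1, hFa]
      have hpb : lam * lam ^ (b - 1) = lam ^ b := by
        rw [← pow_succ']; congr 1; omega
      linarith
    · rw [if_neg h0]
      by_cases h1 : i.val = a - 1
      · rw [if_pos h1, hpad 0 (by omega), hpad a (by omega), h1, hF0, hFa]
        have hFv : F (a - 1) = lam ^ (a - 2) * (lam ^ b - 1) := by
          rw [hFdef]
          dsimp only
          rw [if_neg (by omega), if_pos (by omega)]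
          congr 2
        rw [hFv]
        have p2 : lam * lam ^ (a - 2) = lam ^ (a - 1) := by
          rw [← pow_succ']; congr 1; omega
        have p3 : lam ^ (a - 1) * lam ^ b = lam ^ (a + b - 1) := by
          rw [← pow_add]; congr 1; omega
        linear_combination (1 - lam ^ b) * p2 - p3 - heq
      · rw [if_neg h1]
        by_cases h2 : i.val = a + b - 2
        · rw [if_pos h2, hpad 0 (by omega), h2, hF0]
          have hFv : F (a + b - 2) = lam ^ (b - 2) := by
            rw [hFdef]
            dsimp only
            rw [if_neg (by omega), if_neg (by omega)]
            congr 1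
            omega
          rw [hFv, ← pow_succ']
          congr 1
          omega
        · rw [if_neg h2, hpad (i.val + 1) (by omega)]
          by_cases h3 : i.val ≤ a - 2
          · have hup : F (i.val + 1) = lam ^ i.val * (lam ^ b - 1) := by
              rw [hFdef]
              dsimp only
              rw [if_neg (by omega), if_pos (by omega)]
              congr 2
            have hcur : F i.val = lam ^ (i.val - 1) * (lam ^ b - 1) := by
              rw [hFdef]
              dsimp only
              rw [if_neg h0, if_pos (by omega)]
            rw [hup, hcur]
            have p4 : lam * lam ^ (i.val - 1) = lam ^ i.val := by
              rw [← pow_succ']; congr 1; omega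
            linear_combination (-(lam ^ b) + 1) * p4
          · have hup : F (i.val + 1) = lam ^ (i.val + 1 - a) := by
              rw [hFdef]
              dsimp only
              rw [if_neg (by omega), if_neg (by omega)]
            have hcur : F i.val = lam ^ (i.val - a) := by
              rw [hFdef]
              dsimp only
              rw [if_neg h0, if_neg (by omega)]
            rw [hup, hcur, ← pow_succ']
            congr 1
            omega
  have hzero : (adjMat (inftyHatAdj a b)).mulVec x - lam • x = 0 := by
    funext i
    simp [hmv i]
  refine ⟨x, ?_, ?_, ?_, ?_⟩
  · intro h
    have hz := congrFun h ⟨0, by omega⟩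
    rw [hxval] at hz
    simp only [Pi.zero_apply] at hz
    exact absurd hz (ne_of_gt (hFpos _))
  · intro i
    rw [hxval]
    exact le_of_lt (hFpos i.val)
  · rw [hzero]
  · rw [hzero]
    simp


lemma two_out_iff {a b : ℕ} (ha : 2 ≤ a) (hb : 2 ≤ b) (u : Fin (a + b - 1)) :
    (∃ w1 w2 : Fin (a + b - 1), w1 ≠ w2 ∧ inftyHatAdj a b u w1 ∧ inftyHatAdj a b u w2) ↔
      (u.val = 0 ∨ u.val = a - 1) := by
  constructor
  · rintro ⟨w1, w2, hne, h1, h2⟩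
    by_contra hc
    push_neg at hc
    apply hne
    have hu := u.isLt
    have hw1 := w1.isLt
    have hw2 := w2.isLt
    have e : w1.val = w2.val := by
      simp only [inftyHatAdj, inftyAdj] at h1 h2
      omega
    exact Fin.ext e
  · intro h
    have hu := u.isLt
    rcases h with h | h
    · exact ⟨⟨1, by omega⟩, ⟨a, by omega⟩,
        by simp only [ne_eq, Fin.mk.injEq]; omega,
        by simp only [inftyHatAdj, inftyAdj, Fin.val_mk, and_true, true_and, or_true, true_or]; try omega,
        by simp only [inftyHatAdj, inftyAdj, Fin.val_mk, and_true, true_and, or_true, true_or]; try omega⟩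
    · exact ⟨⟨0, by omega⟩, ⟨a, by omega⟩,
        by simp only [ne_eq, Fin.mk.injEq]; omega,
        by simp only [inftyHatAdj, inftyAdj, Fin.val_mk, and_true, true_and, or_true, true_or]; try omega,
        by simp only [inftyHatAdj, inftyAdj, Fin.val_mk, and_true, true_and, or_true, true_or]; try omega⟩

lemma two_in_iff {a b : ℕ} (ha : 2 ≤ a) (hb : 2 ≤ b) (u : Fin (a + b - 1)) :
    (∃ w1 w2 : Fin (a + b - 1), w1 ≠ w2 ∧ inftyHatAdj a b w1 u ∧ inftyHatAdj a b w2 u) ↔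
      (u.val = 0 ∨ u.val = a) := by
  constructor
  · rintro ⟨w1, w2, hne, h1, h2⟩
    by_contra hc
    push_neg at hc
    apply hne
    have hu := u.isLt
    have hw1 := w1.isLt
    have hw2 := w2.isLt
    have e : w1.val = w2.val := by
      simp only [inftyHatAdj, inftyAdj] at h1 h2
      omega
    exact Fin.ext e
  · intro h
    have hu := u.isLt
    rcases h with h | h
    · exact ⟨⟨a - 1, by omega⟩, ⟨a + b - 2, by omega⟩,
        by simp only [ne_eq, Fin.mk.injEq]; omega,
        by simp only [inftyHatAdj, inftyAdj, Fin.val_mk, and_true, true_and, or_true, true_or]; try omega,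
        by simp only [inftyHatAdj, inftyAdj, Fin.val_mk, and_true, true_and, or_true, true_or]; try omega⟩
    · exact ⟨⟨0, by omega⟩, ⟨a - 1, by omega⟩,
        by simp only [ne_eq, Fin.mk.injEq]; omega,
        by simp only [inftyHatAdj, inftyAdj, Fin.val_mk, and_true, true_and, or_true, true_or]; try omega,
        by simp only [inftyHatAdj, inftyAdj, Fin.val_mk, and_true, true_and, or_true, true_or]; try omega⟩

lemma not_iso {r s : ℕ} (hr : 2 ≤ r) (hrs : r < s) :
    ¬ ∃ e : Fin (r + s - 1) ≃ Fin (s + r - 1),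
        ∀ u w, inftyHatAdj r s u w ↔ inftyHatAdj s r (e u) (e w) := by
  have hs : 2 ≤ s := by omega
  rintro ⟨e, he⟩
  -- e preserves the two-out and two-in properties
  have hTwoOut : ∀ u : Fin (r + s - 1), (u.val = 0 ∨ u.val = r - 1) →
      ((e u).val = 0 ∨ (e u).val = s - 1) := by
    intro u hu
    rw [← two_out_iff hr hs u] at hu
    rw [← two_out_iff hs hr (e u)]
    obtain ⟨w1, w2, hne, h1, h2⟩ := hu
    exact ⟨e w1, e w2, fun hEq => hne (e.injective hEq), (he u w1).mp h1, (he u w2).mp h2⟩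
  have hTwoIn : ∀ u : Fin (r + s - 1), (u.val = 0 ∨ u.val = r) →
      ((e u).val = 0 ∨ (e u).val = s) := by
    intro u hu
    rw [← two_in_iff hr hs u] at hu
    rw [← two_in_iff hs hr (e u)]
    obtain ⟨w1, w2, hne, h1, h2⟩ := hu
    exact ⟨e w1, e w2, fun hEq => hne (e.injective hEq), (he w1 u).mp h1, (he w2 u).mp h2⟩
  have hlt0 : (0:ℕ) < r + s - 1 := by omega
  have h00 : (e ⟨0, hlt0⟩).val = 0 := by
    have o := hTwoOut ⟨0, hlt0⟩ (Or.inl rfl)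
    have i := hTwoIn ⟨0, hlt0⟩ (Or.inl rfl)
    omega
  -- e(1) is either 1 or s
  have hlt1 : (1:ℕ) < r + s - 1 := by omega
  have harc01 : inftyHatAdj r s ⟨0, hlt0⟩ ⟨1, hlt1⟩ := by
    simp only [inftyHatAdj, inftyAdj, Fin.val_mk, and_true, true_and, or_true, true_or]
    try omega
  have h1s : (e ⟨1, hlt1⟩).val = 1 ∨ (e ⟨1, hlt1⟩).val = s := by
    have hadj := (he _ _).mp harc01
    have hv := (e ⟨1, hlt1⟩).isLt
    simp only [inftyHatAdj, inftyAdj, h00] at hadj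
    omega
  -- the vertex r-1 has two out-neighbors, so its image must be 0 or s-1
  have hltr1 : r - 1 < r + s - 1 := by omega
  have hendbad : (e ⟨r - 1, hltr1⟩).val = 0 ∨ (e ⟨r - 1, hltr1⟩).val = s - 1 :=
    hTwoOut ⟨r - 1, hltr1⟩ (Or.inr rfl)
  rcases h1s with hcase | hcase
  · -- chain follows 1,2,...,r-1 in the target
    have claim : ∀ j, ∀ (hj : 1 + j ≤ r - 1), (e ⟨1 + j, by omega⟩).val = 1 + j := by
      intro j
      induction j with
      | zero => intro hj; exact hcase
      | succ j ih =>
        intro hj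
        have hih := ih (by omega)
        have harc : inftyHatAdj r s ⟨1 + j, by omega⟩ ⟨1 + (j + 1), by omega⟩ := by
          simp only [inftyHatAdj, inftyAdj, Fin.val_mk, and_true, true_and, or_true, true_or]
          try omega
        have hadj := (he _ _).mp harc
        have hv := (e ⟨1 + (j + 1), by omega⟩).isLt
        simp only [inftyHatAdj, inftyAdj, hih] at hadj
        omega
    have hfin := claim (r - 2) (by omega)
    have : (e ⟨1 + (r - 2), by omega⟩).val = r - 1 := by rw [hfin]; omega
    have hsame : (⟨1 + (r - 2), by omega⟩ : Fin (r + s - 1)) = ⟨r - 1, hltr1⟩ := by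
      simp only [Fin.mk.injEq]; omega
    rw [hsame] at this
    omega
  · -- chain follows s, s+1, ..., s+r-2 in the target
    have claim : ∀ j, ∀ (hj : 1 + j ≤ r - 1), (e ⟨1 + j, by omega⟩).val = s + j := by
      intro j
      induction j with
      | zero => intro hj; simpa using hcase
      | succ j ih =>
        intro hj
        have hih := ih (by omega)
        have harc : inftyHatAdj r s ⟨1 + j, by omega⟩ ⟨1 + (j + 1), by omega⟩ := by
          simp only [inftyHatAdj, inftyAdj, Fin.val_mk, and_true, true_and, or_true, true_or]
          try omega
        have hadj := (he _ _).mp harc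
        have hv := (e ⟨1 + (j + 1), by omega⟩).isLt
        simp only [inftyHatAdj, inftyAdj, hih] at hadj
        omega
    have hfin := claim (r - 2) (by omega)
    have hsame : (⟨1 + (r - 2), by omega⟩ : Fin (r + s - 1)) = ⟨r - 1, hltr1⟩ := by
      simp only [Fin.mk.injEq]; omega
    rw [hsame] at hfin
    omega

end Stmt17Aux

theorem stmt17 (r s : ℕ) (hr : 2 ≤ r) (hrs : r < s) :
    {lam : ℝ | isComplEig (adjMat (inftyHatAdj r s)) lam} =
      {lam : ℝ | isComplEig (adjMat (inftyHatAdj s r)) lam} ∧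
    ¬ ∃ e : Fin (r + s - 1) ≃ Fin (s + r - 1),
        ∀ u w, inftyHatAdj r s u w ↔ inftyHatAdj s r (e u) (e w) := by
  have hs : 2 ≤ s := by omega
  constructor
  · ext lam
    simp only [Set.mem_setOf_eq]
    constructor
    · intro h
      rcases Stmt17Aux.lam_char hr hs lam h with h0 | h1 | ⟨hgt, heq⟩
      · rw [h0]; exact Stmt17Aux.zero_mem hs hr
      · rw [h1]; exact Stmt17Aux.one_mem hs hr
      · refine Stmt17Aux.root_mem hs hr lam hgt ?_
        rw [show s + r - 1 = r + s - 1 by omega, heq]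
        ring
    · intro h
      rcases Stmt17Aux.lam_char hs hr lam h with h0 | h1 | ⟨hgt, heq⟩
      · rw [h0]; exact Stmt17Aux.zero_mem hr hs
      · rw [h1]; exact Stmt17Aux.one_mem hr hs
      · refine Stmt17Aux.root_mem hr hs lam hgt ?_
        rw [show r + s - 1 = s + r - 1 by omega, heq]
        ring
  · exact Stmt17Aux.not_iso hr hrs
end

section
/- Let n ≥ 4 be an integer. For every integer j with 3 ≤ j ≤ n − 1, the characteristic polynomial of the adjacency matrix of the digraph D(j) equals X^n − 2X^{n−2} + X^{n−4} − 1; in particular it does not depend on j. -/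
open Matrix Polynomial

/-- Arc relation of the digraph `D(j)` (with vertices `1, …, n` of the paper encoded as
`0, …, n-1`): the directed `n`-cycle `0 → 1 → ⋯ → n-1 → 0` together with the two extra
arcs `(2,1)` and `(j+1,j)` of the paper, i.e. `(1,0)` and `(j, j-1)` in this encoding. -/
def Dj (n j : ℕ) : Fin n → Fin n → Prop := fun i k =>
  (k.val = i.val + 1) ∨
  (i.val = n - 1 ∧ k.val = 0) ∨
  (i.val = 1 ∧ k.val = 0) ∨
  (i.val = j ∧ k.val = j - 1)

section Aux

lemma perm_eq_one_of_le {m : ℕ} (σ : Equiv.Perm (Fin m)) (h : ∀ i, σ i ≤ i) : σ = 1 := by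
  have key : ∀ k : ℕ, ∀ i : Fin m, i.val ≤ k → σ i = i := by
    intro k
    induction k with
    | zero =>
      intro i hi
      have h1 := h i
      have : (σ i).val ≤ i.val := h1
      exact Fin.ext (by omega)
    | succ k ih =>
      intro i hi
      rcases lt_or_eq_of_le (h i) with hlt | heq
      · exfalso
        have hv : (σ i).val < i.val := hlt
        have h2 : σ (σ i) = σ i := ih (σ i) (by omega)
        have := σ.injective h2
        rw [this] at hv
        omega
      · exact heq
  ext i
  exact congrArg Fin.val (key i.val i le_rfl)

lemma perm_classify {m p : ℕ} (hp : p + 1 < m) (σ : Equiv.Perm (Fin m))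
    (h : ∀ i, σ i ≤ i ∨ ((i : ℕ) = p ∧ ((σ i : ℕ) = p + 1))) :
    σ = 1 ∨ σ = Equiv.swap ⟨p, by omega⟩ ⟨p + 1, hp⟩ := by
  set p0 : Fin m := ⟨p, by omega⟩ with hp0
  set p1 : Fin m := ⟨p + 1, hp⟩ with hp1
  by_cases hc : σ p0 = p1
  · right
    have hne : p0 ≠ p1 := by simp [hp0, hp1, Fin.ext_iff]
    have hτ : Equiv.swap p0 p1 * σ = 1 := by
      apply perm_eq_one_of_le
      intro i
      by_cases hip : i = p0
      · subst hip
        simp only [Equiv.Perm.mul_apply, hc, Equiv.swap_apply_right]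
        exact le_rfl
      · have hσi : σ i ≤ i := by
          rcases h i with h1 | h1
          · exact h1
          · exact absurd (Fin.ext h1.1 : i = p0) hip
        by_cases h0 : σ i = p0
        · have hip0 : p0 < i := lt_of_le_of_ne (h0 ▸ hσi) (fun hh => hip hh.symm)
          simp only [Equiv.Perm.mul_apply, h0, Equiv.swap_apply_left]
          have hv : p < i.val := hip0
          show p1 ≤ i
          rw [Fin.le_def]
          show p + 1 ≤ i.val
          omega
        · have h1' : σ i ≠ p1 := fun hh => hip (σ.injective (hh.trans hc.symm))
          simp only [Equiv.Perm.mul_apply, Equiv.swap_apply_of_ne_of_ne h0 h1']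
          exact hσi
    have : σ = Equiv.swap p0 p1 := by
      have h2 : Equiv.swap p0 p1 * Equiv.swap p0 p1 = 1 := Equiv.swap_mul_self p0 p1
      exact mul_left_cancel (hτ.trans h2.symm)
    exact this
  · left
    apply perm_eq_one_of_le
    intro i
    rcases h i with h1 | h1
    · exact h1
    · exfalso
      exact hc (by rw [← (Fin.ext h1.1 : i = p0)]; exact Fin.ext h1.2)

variable {R : Type*} [CommRing R]

lemma det_almost_upper {m p : ℕ} (hp : p + 1 < m) (M : Matrix (Fin m) (Fin m) R)
    (h : ∀ i k : Fin m, (k : ℕ) < (i : ℕ) → ¬((i : ℕ) = p + 1 ∧ (k : ℕ) = p) → M i k = 0) :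
    M.det = ∏ i, M i i -
      M ⟨p + 1, hp⟩ ⟨p, by omega⟩ * M ⟨p, by omega⟩ ⟨p + 1, hp⟩ *
        ∏ i ∈ (Finset.univ.erase ⟨p, by omega⟩).erase ⟨p + 1, hp⟩, M i i := by
  set p0 : Fin m := ⟨p, by omega⟩
  set p1 : Fin m := ⟨p + 1, hp⟩
  have hne : p0 ≠ p1 := by simp [p0, p1, Fin.ext_iff]
  set τ : Equiv.Perm (Fin m) := Equiv.swap p0 p1 with hτ
  have hτ1 : (1 : Equiv.Perm (Fin m)) ≠ τ := by
    intro hh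
    exact hne (by simpa using (Equiv.swap_eq_one_iff.mp hh.symm))
  rw [Matrix.det_apply]
  rw [← Finset.sum_subset (Finset.subset_univ ({1, τ} : Finset (Equiv.Perm (Fin m))))]
  · rw [Finset.sum_pair hτ1]
    have h1 : (Equiv.Perm.sign (1 : Equiv.Perm (Fin m))) • ∏ i, M ((1 : Equiv.Perm (Fin m)) i) i
        = ∏ i, M i i := by simp
    have h2 : (Equiv.Perm.sign τ) • ∏ i, M (τ i) i
        = -(M p1 p0 * M p0 p1 * ∏ i ∈ (Finset.univ.erase p0).erase p1, M i i) := by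
      rw [hτ, Equiv.Perm.sign_swap hne]
      have hprod : ∏ i, M (Equiv.swap p0 p1 i) i
          = M p1 p0 * (M p0 p1 * ∏ i ∈ (Finset.univ.erase p0).erase p1, M i i) := by
        rw [← Finset.mul_prod_erase Finset.univ _ (Finset.mem_univ p0)]
        rw [← Finset.mul_prod_erase (Finset.univ.erase p0) _
          (Finset.mem_erase.mpr ⟨hne.symm, Finset.mem_univ p1⟩)]
        rw [Equiv.swap_apply_left, Equiv.swap_apply_right]
        congr 2
        apply Finset.prod_congr rfl
        intro i hi
        rw [Finset.mem_erase, Finset.mem_erase] at hi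
        rw [Equiv.swap_apply_of_ne_of_ne hi.2.1 hi.1]
      rw [hprod]
      simp [mul_assoc]
    rw [h1, h2]
    ring
  · intro σ _ hσ
    have hz : ∏ i, M (σ i) i = 0 := by
      by_contra hnz
      have hcond : ∀ i, σ i ≤ i ∨ ((i : ℕ) = p ∧ ((σ i : ℕ) = p + 1)) := by
        intro i
        by_contra hcon
        push_neg at hcon
        have hlt : (i : ℕ) < ((σ i) : ℕ) := Fin.lt_def.mp hcon.1
        have hzero : M (σ i) i = 0 := by
          apply h (σ i) i hlt
          rintro ⟨ha, hb⟩
          exact hcon.2 hb ha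
        exact hnz (Finset.prod_eq_zero (Finset.mem_univ i) hzero)
      rcases perm_classify hp σ hcond with h' | h'
      · exact hσ (by simp [h'])
      · exact hσ (by simp [h', hτ]; rfl)
    rw [hz, smul_zero]

lemma succAbove_val {m : ℕ} (q : Fin (m + 1)) (i : Fin m) :
    ((q.succAbove i : Fin (m + 1)) : ℕ) = if (i : ℕ) < (q : ℕ) then (i : ℕ) else (i : ℕ) + 1 := by
  rw [Fin.succAbove]
  by_cases h : (i : ℕ) < (q : ℕ)
  · rw [if_pos (Fin.lt_def.mpr (by simpa using h)), if_pos h, Fin.coe_castSucc]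
  · rw [if_neg (fun hh => h (by simpa using Fin.lt_def.mp hh)), if_neg h, Fin.val_succ]

end Aux

theorem stmt18 (n j : ℕ) (hn : 4 ≤ n) (hj1 : 3 ≤ j) (hj2 : j ≤ n - 1) :
    (adjMat (Dj n j)).charpoly =
      X ^ n - 2 * X ^ (n - 2) + X ^ (n - 4) - 1 := by
  obtain ⟨N, rfl⟩ : ∃ N, n = N + 1 := ⟨n - 1, by omega⟩
  have hN : 3 ≤ N := by omega
  have hjN : j ≤ N := by omega
  set M := charmatrix (adjMat (Dj (N + 1) j)) with hMdef
  have hM : ∀ i k : Fin (N + 1), M i k =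
      if (i : ℕ) = (k : ℕ) then X
      else if ((k : ℕ) = (i : ℕ) + 1 ∨ ((i : ℕ) = N ∧ (k : ℕ) = 0) ∨
          ((i : ℕ) = 1 ∧ (k : ℕ) = 0) ∨ ((i : ℕ) = j ∧ (k : ℕ) = j - 1)) then -1 else 0 := by
    intro i k
    have hDj : Dj (N + 1) j i k ↔ ((k : ℕ) = (i : ℕ) + 1 ∨ ((i : ℕ) = N ∧ (k : ℕ) = 0) ∨
        ((i : ℕ) = 1 ∧ (k : ℕ) = 0) ∨ ((i : ℕ) = j ∧ (k : ℕ) = j - 1)) := by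
      unfold Dj
      simp
    by_cases hik : (i : ℕ) = (k : ℕ)
    · have hik' : i = k := Fin.ext hik
      subst hik'
      rw [if_pos rfl, hMdef, Matrix.charmatrix_apply_eq]
      have hA0 : adjMat (Dj (N + 1) j) i i = 0 := by
        unfold adjMat
        rw [Matrix.of_apply, if_neg]
        rw [hDj]
        have := i.isLt
        omega
      rw [hA0, map_zero, sub_zero]
    · rw [if_neg hik, hMdef, Matrix.charmatrix_apply_ne _ _ _
        (fun hh => hik (congrArg Fin.val hh))]
      unfold adjMat
      rw [Matrix.of_apply]
      by_cases hd : Dj (N + 1) j i k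
      · rw [if_pos hd, if_pos (hDj.mp hd), Polynomial.C_1]
      · rw [if_neg hd, if_neg (fun hc => hd (hDj.mpr hc)), map_zero, neg_zero]
  rw [Matrix.charpoly, Matrix.det_succ_column_zero]
  have hv1 : ((1 : Fin (N + 1)) : ℕ) = 1 := by
    rw [Fin.val_one']
    exact Nat.mod_eq_of_lt (by omega)
  have hp0 : j - 2 + 1 < N := by omega
  have e0 : ∀ k : Fin N, (((0 : Fin (N + 1)).succAbove k) : ℕ) = (k : ℕ) + 1 := by
    intro k
    rw [succAbove_val]
    simp
  have e1a : ∀ k : Fin N, 0 < (k : ℕ) → (((1 : Fin (N + 1)).succAbove k) : ℕ) = (k : ℕ) + 1 := by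
    intro k hk
    rw [succAbove_val, hv1, if_neg (by omega)]
  have e1b : ∀ k : Fin N, (k : ℕ) = 0 → (((1 : Fin (N + 1)).succAbove k) : ℕ) = 0 := by
    intro k hk
    rw [succAbove_val, hv1, if_pos (by first | omega | simp | (simp; omega)), hk]
  have elast : ∀ k : Fin N, (((Fin.last N).succAbove k) : ℕ) = (k : ℕ) := by
    intro k
    rw [succAbove_val, Fin.val_last, if_pos k.isLt]
  -- determinant of the submatrix for i = 0
  have hdet0 : (M.submatrix (Fin.succAbove (0 : Fin (N + 1))) Fin.succ).det
      = X ^ N - X ^ (N - 2) := by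
    have hzS0 : ∀ k l : Fin N, (l : ℕ) < (k : ℕ) → ¬((k : ℕ) = j - 2 + 1 ∧ (l : ℕ) = j - 2) →
        M.submatrix (Fin.succAbove (0 : Fin (N + 1))) Fin.succ k l = 0 := by
      intro k l hlt hexc
      rw [Matrix.submatrix_apply, hM]
      simp only [e0, Fin.val_succ]
      rw [if_neg (by omega), if_neg (by omega)]
    rw [det_almost_upper hp0 _ hzS0]
    have hdiag : ∀ k : Fin N, M.submatrix (Fin.succAbove (0 : Fin (N + 1))) Fin.succ k k = X := by
      intro k
      rw [Matrix.submatrix_apply, hM]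
      simp only [e0, Fin.val_succ]
      rw [if_pos trivial]
    have hprod1 : ∏ i, M.submatrix (Fin.succAbove (0 : Fin (N + 1))) Fin.succ i i = X ^ N := by
      rw [Finset.prod_congr rfl (fun i _ => hdiag i), Finset.prod_const, Finset.card_univ,
        Fintype.card_fin]
    have hmem : (⟨j - 2 + 1, hp0⟩ : Fin N) ∈ Finset.univ.erase ⟨j - 2, by omega⟩ :=
      Finset.mem_erase.mpr ⟨by simp only [ne_eq, Fin.mk.injEq]; omega, Finset.mem_univ _⟩
    have hcard : ((Finset.univ.erase (⟨j - 2, by omega⟩ : Fin N)).erase ⟨j - 2 + 1, hp0⟩).card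
        = N - 2 := by
      rw [Finset.card_erase_of_mem hmem, Finset.card_erase_of_mem (Finset.mem_univ _),
        Finset.card_univ, Fintype.card_fin]
      omega
    have hprod2 : ∏ i ∈ (Finset.univ.erase (⟨j - 2, by omega⟩ : Fin N)).erase ⟨j - 2 + 1, hp0⟩,
        M.submatrix (Fin.succAbove (0 : Fin (N + 1))) Fin.succ i i = X ^ (N - 2) := by
      rw [Finset.prod_congr rfl (fun i _ => hdiag i), Finset.prod_const, hcard]
    have hc1 : M.submatrix (Fin.succAbove (0 : Fin (N + 1))) Fin.succ
        ⟨j - 2 + 1, hp0⟩ ⟨j - 2, by omega⟩ = -1 := by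
      rw [Matrix.submatrix_apply, hM]
      simp only [e0, Fin.val_succ, Fin.val_mk]
      rw [if_neg (by omega), if_pos (by first | omega | simp | (simp; omega))]
    have hc2 : M.submatrix (Fin.succAbove (0 : Fin (N + 1))) Fin.succ
        ⟨j - 2, by omega⟩ ⟨j - 2 + 1, hp0⟩ = -1 := by
      rw [Matrix.submatrix_apply, hM]
      simp only [e0, Fin.val_succ, Fin.val_mk]
      rw [if_neg (by omega), if_pos (by first | omega | simp | (simp; omega))]
    rw [hprod1, hprod2, hc1, hc2]
    ring
  -- determinant of the submatrix for i = 1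
  have hdet1 : (M.submatrix (Fin.succAbove (1 : Fin (N + 1))) Fin.succ).det
      = -X ^ (N - 1) + X ^ (N - 3) := by
    have hzS1 : ∀ k l : Fin N, (l : ℕ) < (k : ℕ) → ¬((k : ℕ) = j - 2 + 1 ∧ (l : ℕ) = j - 2) →
        M.submatrix (Fin.succAbove (1 : Fin (N + 1))) Fin.succ k l = 0 := by
      intro k l hlt hexc
      rw [Matrix.submatrix_apply, hM]
      rw [e1a k (by omega)]
      simp only [Fin.val_succ]
      rw [if_neg (by omega), if_neg (by omega)]
    rw [det_almost_upper hp0 _ hzS1]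
    have hdiagpos : ∀ k : Fin N, 0 < (k : ℕ) →
        M.submatrix (Fin.succAbove (1 : Fin (N + 1))) Fin.succ k k = X := by
      intro k hk
      rw [Matrix.submatrix_apply, hM]
      rw [e1a k hk]
      simp only [Fin.val_succ]
      rw [if_pos trivial]
    have hdiag0 : M.submatrix (Fin.succAbove (1 : Fin (N + 1))) Fin.succ
        ⟨0, by omega⟩ ⟨0, by omega⟩ = -1 := by
      rw [Matrix.submatrix_apply, hM]
      rw [e1b _ rfl]
      simp only [Fin.val_succ, Fin.val_mk]
      rw [if_neg (by omega), if_pos (by first | omega | simp | (simp; omega))]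
    have hprodA : ∏ i, M.submatrix (Fin.succAbove (1 : Fin (N + 1))) Fin.succ i i
        = -X ^ (N - 1) := by
      rw [← Finset.mul_prod_erase Finset.univ _ (Finset.mem_univ (⟨0, by omega⟩ : Fin N))]
      have hrest : ∀ i ∈ Finset.univ.erase (⟨0, by omega⟩ : Fin N),
          M.submatrix (Fin.succAbove (1 : Fin (N + 1))) Fin.succ i i = X := by
        intro i hi
        have hne := (Finset.mem_erase.mp hi).1
        exact hdiagpos i (by
          rcases Nat.eq_zero_or_pos (i : ℕ) with h0 | h0
          · exact absurd (Fin.ext h0) hne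
          · exact h0)
      rw [Finset.prod_congr rfl hrest, Finset.prod_const,
        Finset.card_erase_of_mem (Finset.mem_univ _), Finset.card_univ, Fintype.card_fin, hdiag0]
      ring
    have hmem : (⟨j - 2 + 1, hp0⟩ : Fin N) ∈ Finset.univ.erase ⟨j - 2, by omega⟩ :=
      Finset.mem_erase.mpr ⟨by simp only [ne_eq, Fin.mk.injEq]; omega, Finset.mem_univ _⟩
    have hmem0 : (⟨0, by omega⟩ : Fin N)
        ∈ (Finset.univ.erase (⟨j - 2, by omega⟩ : Fin N)).erase ⟨j - 2 + 1, hp0⟩ := by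
      refine Finset.mem_erase.mpr ⟨by simp only [ne_eq, Fin.mk.injEq]; omega,
        Finset.mem_erase.mpr ⟨by simp only [ne_eq, Fin.mk.injEq]; omega, Finset.mem_univ _⟩⟩
    have hprodB : ∏ i ∈ (Finset.univ.erase (⟨j - 2, by omega⟩ : Fin N)).erase ⟨j - 2 + 1, hp0⟩,
        M.submatrix (Fin.succAbove (1 : Fin (N + 1))) Fin.succ i i = -X ^ (N - 3) := by
      rw [← Finset.mul_prod_erase _ _ hmem0]
      have hrest : ∀ i ∈ (((Finset.univ.erase (⟨j - 2, by omega⟩ : Fin N)).erase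
          ⟨j - 2 + 1, hp0⟩).erase ⟨0, by omega⟩),
          M.submatrix (Fin.succAbove (1 : Fin (N + 1))) Fin.succ i i = X := by
        intro i hi
        have hne := (Finset.mem_erase.mp hi).1
        exact hdiagpos i (by
          rcases Nat.eq_zero_or_pos (i : ℕ) with h0 | h0
          · exact absurd (Fin.ext h0) hne
          · exact h0)
      rw [Finset.prod_congr rfl hrest, Finset.prod_const, Finset.card_erase_of_mem hmem0,
        Finset.card_erase_of_mem hmem, Finset.card_erase_of_mem (Finset.mem_univ _),
        Finset.card_univ, Fintype.card_fin, hdiag0]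
      have : N - 1 - 1 - 1 = N - 3 := by omega
      rw [this]
      ring
    have hc1 : M.submatrix (Fin.succAbove (1 : Fin (N + 1))) Fin.succ
        ⟨j - 2 + 1, hp0⟩ ⟨j - 2, by omega⟩ = -1 := by
      rw [Matrix.submatrix_apply, hM]
      rw [e1a _ (by rw [Fin.val_mk]; omega)]
      simp only [Fin.val_succ, Fin.val_mk]
      rw [if_neg (by omega), if_pos (by first | omega | simp | (simp; omega))]
    have hc2 : M.submatrix (Fin.succAbove (1 : Fin (N + 1))) Fin.succ
        ⟨j - 2, by omega⟩ ⟨j - 2 + 1, hp0⟩ = -1 := by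
      rw [Matrix.submatrix_apply, hM]
      rw [e1a _ (by rw [Fin.val_mk]; omega)]
      simp only [Fin.val_succ, Fin.val_mk]
      rw [if_neg (by omega), if_pos (by first | omega | simp | (simp; omega))]
    rw [hprodA, hprodB, hc1, hc2]
    ring
  -- determinant of the submatrix for i = last
  have hdetlast : (M.submatrix (Fin.succAbove (Fin.last N)) Fin.succ).det = (-1 : ℝ[X]) ^ N := by
    rw [← Matrix.det_transpose]
    have hzT : ∀ a b : Fin N, (b : ℕ) < (a : ℕ) → ¬((a : ℕ) = 0 + 1 ∧ (b : ℕ) = 0) →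
        (M.submatrix (Fin.succAbove (Fin.last N)) Fin.succ)ᵀ a b = 0 := by
      intro a b hba _
      rw [Matrix.transpose_apply, Matrix.submatrix_apply, hM]
      simp only [elast, Fin.val_succ, Fin.val_mk]
      rw [if_neg (by omega), if_neg (by omega)]
    rw [det_almost_upper (show 0 + 1 < N by omega) _ hzT]
    have hcz : (M.submatrix (Fin.succAbove (Fin.last N)) Fin.succ)ᵀ
        ⟨0 + 1, by omega⟩ ⟨0, by omega⟩ = 0 := by
      rw [Matrix.transpose_apply, Matrix.submatrix_apply, hM]
      simp only [elast, Fin.val_succ, Fin.val_mk]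
      rw [if_neg (by omega), if_neg (by omega)]
    have hdg : ∀ a : Fin N, (M.submatrix (Fin.succAbove (Fin.last N)) Fin.succ)ᵀ a a = -1 := by
      intro a
      rw [Matrix.transpose_apply, Matrix.submatrix_apply, hM]
      simp only [elast, Fin.val_succ]
      rw [if_neg (by omega), if_pos (by first | omega | simp | (simp; omega))]
    rw [hcz, Finset.prod_congr rfl (fun i _ => hdg i), Finset.prod_const, Finset.card_univ,
      Fintype.card_fin]
    ring
  -- entries in column 0
  have hm00 : M 0 0 = X := by
    rw [hM, if_pos rfl]
  have hm10 : M 1 0 = -1 := by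
    rw [hM]
    simp only [hv1, Fin.val_zero]
    rw [if_neg (by omega), if_pos (by first | omega | simp | (simp; omega))]
  have hmlast : M (Fin.last N) 0 = -1 := by
    rw [hM]
    simp only [Fin.val_last, Fin.val_zero]
    rw [if_neg (by omega), if_pos (by first | omega | simp | (simp; omega))]
  -- reduce the sum to three terms
  have h0mem : (0 : Fin (N + 1)) ∉ ({1, Fin.last N} : Finset (Fin (N + 1))) := by
    simp only [Finset.mem_insert, Finset.mem_singleton, Fin.ext_iff, hv1, Fin.val_last,
      Fin.val_zero]
    omega
  have h1mem : (1 : Fin (N + 1)) ∉ ({Fin.last N} : Finset (Fin (N + 1))) := by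
    simp only [Finset.mem_singleton, Fin.ext_iff, hv1, Fin.val_last]
    omega
  have hzt : ∀ i ∈ Finset.univ, i ∉ ({0, 1, Fin.last N} : Finset (Fin (N + 1))) →
      (-1 : ℝ[X]) ^ (i : ℕ) * M i 0 * (M.submatrix i.succAbove Fin.succ).det = 0 := by
    intro i _ hi
    simp only [Finset.mem_insert, Finset.mem_singleton] at hi
    push_neg at hi
    have hi0 : (i : ℕ) ≠ 0 := fun h => hi.1 (Fin.ext (by simpa using h))
    have hi1 : (i : ℕ) ≠ 1 := fun h => hi.2.1 (Fin.ext (by rw [hv1]; simpa using h))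
    have hiN : (i : ℕ) ≠ N := fun h => hi.2.2 (Fin.ext (by rw [Fin.val_last]; simpa using h))
    have : M i 0 = 0 := by
      rw [hM]
      simp only [Fin.val_zero]
      rw [if_neg (by omega), if_neg (by omega)]
    rw [this]
    ring
  rw [← Finset.sum_subset (Finset.subset_univ ({0, 1, Fin.last N} : Finset (Fin (N + 1)))) hzt]
  rw [Finset.sum_insert h0mem, Finset.sum_insert h1mem, Finset.sum_singleton]
  rw [hdet0, hdet1, hdetlast, hm00, hm10, hmlast]
  simp only [Fin.val_zero, hv1, Fin.val_last, pow_zero, pow_one]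
  have h2N : (-1 : ℝ[X]) ^ N * (-1 : ℝ[X]) ^ N = 1 := by
    rw [← pow_add]
    exact Even.neg_one_pow ⟨N, rfl⟩
  rw [show N + 1 - 2 = N - 1 from by omega, show N + 1 - 4 = N - 3 from by omega]
  rw [mul_right_comm ((-1 : ℝ[X]) ^ N) (-1 : ℝ[X]) ((-1 : ℝ[X]) ^ N), h2N]
  rw [pow_succ X N]
  rw [show (X : ℝ[X]) ^ (N - 1) = X ^ (N - 2) * X from by rw [← pow_succ]; congr 1; omega]
  ring
end
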